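/- arXiv:math/0002033 — 7 statements merged into one kernel-verified Lean document; each statement's English description precedes it below -/
import Mathlib

section
/- Let θ(z) be a function holomorphic on a neighborhood of 0 in ℂ^N with values in bounded operators from a Hilbert space U to a Hilbert space Y, and suppose θ has a zero of multiplicity m > 0 at z = 0 (i.e., the first m−1 homogeneous terms of its Taylor expansion vanish and the m-th does not). Then there exist separable Hilbert spaces Y⁽⁰⁾ = Y, Y⁽¹⁾, …, Y⁽ᵐ⁾, bounded operators L_k^{(j)} : Y⁽ʲ⁾ → Y⁽ʲ⁻¹⁾ for j = 1,…,m and k = 1,…,N, and a function φ holomorphic on a (possibly smaller) neighborhood of 0 with values in bounded operators from U to Y⁽ᵐ⁾ with φ(0) ≠ 0, such that θ(z) = (zL⁽¹⁾)⋯(zL⁽ᵐ⁾)φ(z) on that neighborhood, where zL⁽ʲ⁾ := Σ_{k=1}^N z_k L_k^{(j)}. -/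
noncomputable section

open scoped ComplexConjugate

/-- A bundled separable complex Hilbert space. -/
structure HilbertSp : Type 1 where
  carrier : Type
  [iN : NormedAddCommGroup carrier]
  [iI : InnerProductSpace ℂ carrier]
  [iC : CompleteSpace carrier]
  [iS : TopologicalSpace.SeparableSpace carrier]

attribute [instance] HilbertSp.iN HilbertSp.iI HilbertSp.iC HilbertSp.iS

variable {N : ℕ}

/-- The linear pencil `z ↦ Σₖ z_k T_k` associated with an `N`-tuple of operators. -/
def pencil {E F : Type*} [NormedAddCommGroup E] [NormedAddCommGroup F]
    [NormedSpace ℂ E] [NormedSpace ℂ F]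
    (T : Fin N → (E →L[ℂ] F)) (z : Fin N → ℂ) : E →L[ℂ] F := ∑ k, z k • T k

/-- membership in the unit torus `𝕋^N` -/
def onTorus (ζ : Fin N → ℂ) : Prop := ∀ k, ‖ζ k‖ = 1

/-- membership in the open unit polydisk `𝔻^N` -/
def inPolydisk (z : Fin N → ℂ) : Prop := ∀ k, ‖z k‖ < 1

/-- `θ` has a zero of multiplicity `m` at `z = 0`: it is holomorphic near `0` and the
homogeneous terms of its Taylor expansion of degree `< m` vanish while that of degree `m`
does not. -/
def HasZeroOfOrder {U Y : Type*} [NormedAddCommGroup U] [NormedAddCommGroup Y]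
    [NormedSpace ℂ U] [NormedSpace ℂ Y]
    (θ : (Fin N → ℂ) → (U →L[ℂ] Y)) (m : ℕ) : Prop :=
  ∃ p : FormalMultilinearSeries ℂ (Fin N → ℂ) (U →L[ℂ] Y),
    HasFPowerSeriesAt θ p 0 ∧ (∀ j, j < m → ∀ z : Fin N → ℂ, (p j) (fun _ => z) = 0) ∧
      (∃ z : Fin N → ℂ, (p m) (fun _ => z) ≠ 0)

/-- The product `(zL⁽¹⁾)(zL⁽²⁾)⋯(zL⁽ᵐ⁾) : Ysp m → Ysp 0` of linear pencils along a chain of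
spaces, where `L j k : Ysp (j+1) → Ysp j` plays the role of `L_k^{(j+1)}`. -/
def chainMul {Ysp : ℕ → Type*} [∀ j, NormedAddCommGroup (Ysp j)] [∀ j, NormedSpace ℂ (Ysp j)]
    (L : (j : ℕ) → Fin N → (Ysp (j + 1) →L[ℂ] Ysp j)) (z : Fin N → ℂ) :
    (m : ℕ) → (Ysp m →L[ℂ] Ysp 0)
  | 0 => ContinuousLinearMap.id ℂ (Ysp 0)
  | (m + 1) => (chainMul L z m).comp (pencil (L m) z)

/-- The product `(zR⁽ᵐ⁾)⋯(zR⁽¹⁾) : Usp 0 → Usp m` of linear pencils along a chain of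
spaces, where `R j k : Usp j → Usp (j+1)` plays the role of `R_k^{(j+1)}`. -/
def chainMulR {Usp : ℕ → Type*} [∀ j, NormedAddCommGroup (Usp j)] [∀ j, NormedSpace ℂ (Usp j)]
    (R : (j : ℕ) → Fin N → (Usp j →L[ℂ] Usp (j + 1))) (z : Fin N → ℂ) :
    (m : ℕ) → (Usp 0 →L[ℂ] Usp m)
  | 0 => ContinuousLinearMap.id ℂ (Usp 0)
  | (m + 1) => (pencil (R m) z).comp (chainMulR R z m)

/-- the Hilbert space direct sum `E ⊕ F` -/
abbrev hS (E F : Type*) := WithLp 2 (E × F)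

section blocks

variable (E F : Type*) [NormedAddCommGroup E] [NormedAddCommGroup F]
  [NormedSpace ℂ E] [NormedSpace ℂ F]

/-- inclusion of the first summand -/
def inlL : E →L[ℂ] hS E F :=
  ((WithLp.prodContinuousLinearEquiv 2 ℂ E F).symm : E × F →L[ℂ] hS E F).comp
    (ContinuousLinearMap.inl ℂ E F)

/-- inclusion of the second summand -/
def inrL : F →L[ℂ] hS E F :=
  ((WithLp.prodContinuousLinearEquiv 2 ℂ E F).symm : E × F →L[ℂ] hS E F).comp
    (ContinuousLinearMap.inr ℂ E F)

/-- projection onto the first summand -/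
def fstL : hS E F →L[ℂ] E :=
  (ContinuousLinearMap.fst ℂ E F).comp
    (WithLp.prodContinuousLinearEquiv 2 ℂ E F : hS E F →L[ℂ] E × F)

/-- projection onto the second summand -/
def sndL : hS E F →L[ℂ] F :=
  (ContinuousLinearMap.snd ℂ E F).comp
    (WithLp.prodContinuousLinearEquiv 2 ℂ E F : hS E F →L[ℂ] E × F)

end blocks

/-- the block operator `[[A,B],[C,D]] : X ⊕ U → X' ⊕ Y'` -/
def block2 {X U X' Y' : Type*} [NormedAddCommGroup X] [NormedAddCommGroup U]
    [NormedAddCommGroup X'] [NormedAddCommGroup Y']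
    [NormedSpace ℂ X] [NormedSpace ℂ U] [NormedSpace ℂ X'] [NormedSpace ℂ Y']
    (A : X →L[ℂ] X') (B : U →L[ℂ] X') (C : X →L[ℂ] Y') (D : U →L[ℂ] Y') :
    hS X U →L[ℂ] hS X' Y' :=
  (inlL X' Y').comp (A.comp (fstL X U)) + (inlL X' Y').comp (B.comp (sndL X U)) +
    (inrL X' Y').comp (C.comp (fstL X U)) + (inrL X' Y').comp (D.comp (sndL X U))

/-- the transfer function `θ_α(z) = zD + zC (1 - zA)⁻¹ zB` of the system
`α = (N; A, B, C, D; X, U, Y)` -/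
def transfer {X U Y : Type*} [NormedAddCommGroup X] [NormedAddCommGroup U] [NormedAddCommGroup Y]
    [NormedSpace ℂ X] [NormedSpace ℂ U] [NormedSpace ℂ Y]
    (A : Fin N → (X →L[ℂ] X)) (B : Fin N → (U →L[ℂ] X)) (C : Fin N → (X →L[ℂ] Y))
    (D : Fin N → (U →L[ℂ] Y)) (z : Fin N → ℂ) : U →L[ℂ] Y :=
  pencil D z + (pencil C z).comp ((Ring.inverse (1 - pencil A z)).comp (pencil B z))

/-- unitarity of a bounded operator between Hilbert spaces -/
def IsUnitaryOp {E F : Type*} [NormedAddCommGroup E] [InnerProductSpace ℂ E] [CompleteSpace E]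
    [NormedAddCommGroup F] [InnerProductSpace ℂ F] [CompleteSpace F] (W : E →L[ℂ] F) : Prop :=
  (ContinuousLinearMap.adjoint W).comp W = 1 ∧ W.comp (ContinuousLinearMap.adjoint W) = 1

/-- the block operator `G_α` of a system, as an `N`-tuple -/
def sysBlock {X U Y : Type*} [NormedAddCommGroup X] [NormedAddCommGroup U] [NormedAddCommGroup Y]
    [NormedSpace ℂ X] [NormedSpace ℂ U] [NormedSpace ℂ Y]
    (A : Fin N → (X →L[ℂ] X)) (B : Fin N → (U →L[ℂ] X)) (C : Fin N → (X →L[ℂ] Y))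
    (D : Fin N → (U →L[ℂ] Y)) : Fin N → (hS X U →L[ℂ] hS X Y) :=
  fun k => block2 (A k) (B k) (C k) (D k)

/-- `α` is a conservative scattering system: `ζ G_α` is unitary for every `ζ ∈ 𝕋^N`. -/
def Conservative {X U Y : Type*} [NormedAddCommGroup X] [InnerProductSpace ℂ X] [CompleteSpace X]
    [NormedAddCommGroup U] [InnerProductSpace ℂ U] [CompleteSpace U]
    [NormedAddCommGroup Y] [InnerProductSpace ℂ Y] [CompleteSpace Y]
    (A : Fin N → (X →L[ℂ] X)) (B : Fin N → (U →L[ℂ] X)) (C : Fin N → (X →L[ℂ] Y))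
    (D : Fin N → (U →L[ℂ] Y)) : Prop :=
  ∀ ζ : Fin N → ℂ, onTorus ζ → IsUnitaryOp (pencil (sysBlock A B C D) ζ)


namespace LLFE

open Finset

variable {E F : Type*} [NormedAddCommGroup E] [NormedSpace ℂ E]
  [NormedAddCommGroup F] [NormedSpace ℂ F]

def sliceOnce (x : E) (p : FormalMultilinearSeries ℂ E F) : FormalMultilinearSeries ℂ E F :=
  fun n => (p (n + 1)).curryLeft x

lemma sliceOnce_apply (x : E) (p : FormalMultilinearSeries ℂ E F) (n : ℕ) (v : Fin n → E) :
    sliceOnce x p n v = p (n + 1) (Fin.cons x v) :=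
  ContinuousMultilinearMap.curryLeft_apply _ _ _

lemma sliceOnce_norm_le (x : E) (p : FormalMultilinearSeries ℂ E F) (n : ℕ) :
    ‖sliceOnce x p n‖ ≤ ‖p (n + 1)‖ * ‖x‖ := by
  apply ContinuousMultilinearMap.opNorm_le_bound (by positivity)
  intro v
  rw [sliceOnce_apply]
  have h1 : ‖p (n + 1) (Fin.cons x v)‖ ≤
      ‖p (n + 1)‖ * ∏ i : Fin (n + 1), ‖Fin.cons (α := fun _ => E) x v i‖ :=
    (p (n + 1)).le_opNorm (Fin.cons x v)
  have h2 : ∏ i : Fin (n + 1), ‖Fin.cons (α := fun _ => E) x v i‖ = ‖x‖ * ∏ i, ‖v i‖ := by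
    rw [← Fin.prod_cons ‖x‖ (fun i => ‖v i‖)]
    refine Finset.prod_congr rfl fun i _ => ?_
    induction i using Fin.cases <;> simp
  rw [h2] at h1
  calc ‖p (n + 1) (Fin.cons x v)‖ ≤ ‖p (n + 1)‖ * (‖x‖ * ∏ i, ‖v i‖) := h1
  _ = ‖p (n + 1)‖ * ‖x‖ * ∏ i, ‖v i‖ := by ring

variable {N : ℕ}

def sliceWord : (m : ℕ) → (Fin m → E) → FormalMultilinearSeries ℂ E F → FormalMultilinearSeries ℂ E F
  | 0, _, p => p
  | m + 1, a, p => sliceWord m (fun i => a i.succ) (sliceOnce (a 0) p)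

lemma sliceWord_norm_le : ∀ (m : ℕ) (a : Fin m → E), (∀ i, ‖a i‖ ≤ 1) →
    ∀ (p : FormalMultilinearSeries ℂ E F) (n : ℕ), ‖sliceWord m a p n‖ ≤ ‖p (n + m)‖
  | 0, a, _, p, n => le_refl _
  | m + 1, a, ha, p, n => by
    have h1 := sliceWord_norm_le m (fun i => a i.succ) (fun i => ha _) (sliceOnce (a 0) p) n
    have h2 : ‖sliceOnce (a 0) p (n + m)‖ ≤ ‖p (n + m + 1)‖ := by
      calc ‖sliceOnce (a 0) p (n + m)‖ ≤ ‖p (n + m + 1)‖ * ‖a 0‖ := sliceOnce_norm_le _ _ _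
      _ ≤ ‖p (n + m + 1)‖ * 1 := by
          exact mul_le_mul_of_nonneg_left (ha 0) (norm_nonneg _)
      _ = ‖p (n + m + 1)‖ := mul_one _
    exact le_trans h1 h2

lemma sliceWord_sum (m : ℕ) (c : Fin N → ℂ) (b : Fin N → E) (x : E)
    (hx : (∑ k, c k • b k) = x) :
    ∀ (p : FormalMultilinearSeries ℂ E F) (n : ℕ),
      ∑ w : Fin m → Fin N, (∏ i, c (w i)) •
        (sliceWord m (fun i => b (w i)) p n (fun _ => x)) = p (n + m) (fun _ => x) := by
  induction m with
  | zero =>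
    intro p n
    rw [Fintype.sum_unique]
    simp [sliceWord]
  | succ m ih =>
    intro p n
    rw [← (Fin.consEquiv (fun _ : Fin (m + 1) => Fin N)).sum_comp, Fintype.sum_prod_type]
    have step : ∀ (k : Fin N) (w' : Fin m → Fin N),
        (∏ i, c ((Fin.consEquiv (fun _ : Fin (m + 1) => Fin N)) (k, w') i)) •
          (sliceWord (m + 1) (fun i => b ((Fin.consEquiv (fun _ : Fin (m + 1) => Fin N)) (k, w') i)) p n (fun _ => x))
        = c k • ((∏ i, c (w' i)) •
            (sliceWord m (fun i => b (w' i)) (sliceOnce (b k) p) n (fun _ => x))) := by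
      intro k w'
      have hA : (∏ i, c ((Fin.consEquiv (fun _ : Fin (m + 1) => Fin N)) (k, w') i))
          = c k * ∏ i, c (w' i) := by
        simp only [Fin.consEquiv_apply]
        rw [show (fun i => c (Fin.cons (α := fun _ => Fin N) k w' i)) = Fin.cons (c k) (fun i => c (w' i)) from
          funext fun i => by refine Fin.cases ?_ ?_ i <;> simp]
        exact Fin.prod_cons _ _
      have hB : sliceWord (m + 1) (fun i => b ((Fin.consEquiv (fun _ : Fin (m + 1) => Fin N)) (k, w') i)) p
          = sliceWord m (fun i => b (w' i)) (sliceOnce (b k) p) := by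
        show sliceWord m (fun i => b ((Fin.consEquiv (fun _ : Fin (m + 1) => Fin N)) (k, w') i.succ))
            (sliceOnce (b ((Fin.consEquiv (fun _ : Fin (m + 1) => Fin N)) (k, w') 0)) p) = _
        simp [Fin.consEquiv_apply]
      rw [hA, hB, mul_smul]
    calc ∑ k, ∑ w' : Fin m → Fin N, (∏ i, c ((Fin.consEquiv (fun _ : Fin (m + 1) => Fin N)) (k, w') i)) •
          (sliceWord (m + 1) (fun i => b ((Fin.consEquiv (fun _ : Fin (m + 1) => Fin N)) (k, w') i)) p n (fun _ => x))
        = ∑ k, c k • ∑ w' : Fin m → Fin N, (∏ i, c (w' i)) •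
            (sliceWord m (fun i => b (w' i)) (sliceOnce (b k) p) n (fun _ => x)) := by
          refine Finset.sum_congr rfl fun k _ => ?_
          rw [Finset.smul_sum]
          exact Finset.sum_congr rfl fun w' _ => step k w'
      _ = ∑ k, c k • (sliceOnce (b k) p (n + m) (fun _ => x)) := by
          refine Finset.sum_congr rfl fun k _ => ?_
          rw [ih (sliceOnce (b k) p) n]
      _ = ∑ k, c k • ((p (n + m + 1)).curryLeft (b k) (fun _ => x)) := rfl
      _ = ((p (n + m + 1)).curryLeft (∑ k, c k • b k)) (fun _ => x) := by
          rw [map_sum]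
          rw [ContinuousMultilinearMap.sum_apply]
          refine Finset.sum_congr rfl fun k _ => ?_
          rw [map_smul, ContinuousMultilinearMap.smul_apply]
      _ = p (n + m + 1) (Fin.cons x (fun _ => x)) := by rw [hx]; exact ContinuousMultilinearMap.curryLeft_apply _ _ _
      _ = p (n + (m + 1)) (fun _ => x) := by
          congr 1
          funext i
          refine Fin.cases ?_ ?_ i <;> simp

lemma sliceWord_radius_pos (m : ℕ) (a : Fin m → E) (ha : ∀ i, ‖a i‖ ≤ 1)
    (p : FormalMultilinearSeries ℂ E F) (hp : 0 < p.radius) :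
    0 < (sliceWord m a p).radius := by
  obtain ⟨r, hr0, hrlt⟩ := ENNReal.lt_iff_exists_nnreal_btwn.1 hp
  have hr0' : (0 : NNReal) < r := ENNReal.coe_pos.1 hr0
  set r' : NNReal := min r 1 with hr'def
  have hr'0 : (0 : NNReal) < r' := lt_min hr0' one_pos
  have hr'lt : (r' : ENNReal) < p.radius :=
    lt_of_le_of_lt (ENNReal.coe_le_coe.2 (min_le_left _ _)) hrlt
  have hs := p.summable_norm_mul_pow hr'lt
  have hs2 : Summable (fun n => ‖p (n + m)‖ * (r' : ℝ) ^ (n + m)) := (summable_nat_add_iff m).2 hs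
  have hrne : ((r' : ℝ)) ≠ 0 := ne_of_gt (by exact_mod_cast hr'0)
  have hs3 : Summable (fun n => ‖p (n + m)‖ * (r' : ℝ) ^ n) := by
    have := hs2.mul_left (((r' : ℝ) ^ m)⁻¹)
    refine this.congr fun n => ?_
    field_simp [pow_add]
    ring
  have hs4 : Summable (fun n => ‖sliceWord m a p n‖ * (r' : ℝ) ^ n) := by
    refine hs3.of_nonneg_of_le (fun n => by positivity) (fun n => ?_)
    exact mul_le_mul_of_nonneg_right (sliceWord_norm_le m a ha p n) (by positivity)
  have hle := (sliceWord m a p).le_radius_of_summable_norm hs4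
  exact lt_of_lt_of_le (ENNReal.coe_pos.2 hr'0) hle


section spaces

variable (N : ℕ) (Y : Type) [NormedAddCommGroup Y] [InnerProductSpace ℂ Y] [CompleteSpace Y]
  [TopologicalSpace.SeparableSpace Y]

abbrev Vsp (j : ℕ) : Type := PiLp 2 (fun _ : Fin j → Fin N => Y)

instance VspSep (j : ℕ) : TopologicalSpace.SeparableSpace (Vsp N Y j) :=
  ((PiLp.continuousLinearEquiv 2 ℂ (fun _ : Fin j → Fin N => Y)).symm.toHomeomorph.surjective.denseRange).separableSpace
    (PiLp.continuousLinearEquiv 2 ℂ (fun _ : Fin j → Fin N => Y)).symm.toHomeomorph.continuous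

instance VspComplete (j : ℕ) : CompleteSpace (Vsp N Y j) := by
  set e := PiLp.continuousLinearEquiv 2 ℂ (fun _ : Fin j → Fin N => Y)
  have he : UniformEquiv (Vsp N Y j) ((Fin j → Fin N) → Y) :=
    { toEquiv := e.toLinearEquiv.toEquiv
      uniformContinuous_toFun := e.toContinuousLinearMap.uniformContinuous
      uniformContinuous_invFun := e.symm.toContinuousLinearMap.uniformContinuous }
  exact he.completeSpace_iff.2 inferInstance

def hilb (j : ℕ) : HilbertSp := { carrier := Vsp N Y j }

def eZero : Vsp N Y 0 ≃ₗᵢ[ℂ] Y where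
  toLinearEquiv := (WithLp.linearEquiv 2 ℂ ((Fin 0 → Fin N) → Y)).trans
    (LinearEquiv.funUnique (Fin 0 → Fin N) ℂ Y)
  norm_map' := by
    intro x
    rw [show ‖x‖ = √(∑ w : Fin 0 → Fin N, ‖x w‖ ^ 2) from PiLp.norm_eq_of_L2 x]
    rw [Fintype.sum_unique]
    rw [Real.sqrt_sq (norm_nonneg _)]
    rfl

lemma eZero_apply (x : Vsp N Y 0) : eZero N Y x = x default := rfl

def Lop (j : ℕ) (k : Fin N) : Vsp N Y (j + 1) →L[ℂ] Vsp N Y j :=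
  (((PiLp.continuousLinearEquiv 2 ℂ (fun _ : Fin j → Fin N => Y)).symm :
      ((Fin j → Fin N) → Y) →L[ℂ] Vsp N Y j)).comp
    ((ContinuousLinearMap.pi (fun w : Fin j → Fin N =>
        (ContinuousLinearMap.proj (Fin.cons k w) : ((Fin (j + 1) → Fin N) → Y) →L[ℂ] Y))).comp
      ((PiLp.continuousLinearEquiv 2 ℂ (fun _ : Fin (j + 1) → Fin N => Y)) :
        Vsp N Y (j + 1) →L[ℂ] ((Fin (j + 1) → Fin N) → Y)))

lemma Lop_apply (j : ℕ) (k : Fin N) (y : Vsp N Y (j + 1)) (w : Fin j → Fin N) :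
    Lop N Y j k y w = y (Fin.cons k w) := rfl

def iota (j : ℕ) (w : Fin j → Fin N) : Y →L[ℂ] Vsp N Y j :=
  (((PiLp.continuousLinearEquiv 2 ℂ (fun _ : Fin j → Fin N => Y)).symm :
      ((Fin j → Fin N) → Y) →L[ℂ] Vsp N Y j)).comp
    (ContinuousLinearMap.pi (fun w' : Fin j → Fin N =>
      if w' = w then ContinuousLinearMap.id ℂ Y else 0))

lemma iota_apply (j : ℕ) (w w' : Fin j → Fin N) (y : Y) :
    iota N Y j w y w' = if w' = w then y else 0 := by
  show (if w' = w then ContinuousLinearMap.id ℂ Y else 0) y = _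
  split_ifs <;> rfl

lemma Vsp_sum_apply (j : ℕ) {α : Type*} (s : Finset α) (f : α → Vsp N Y j)
    (w : Fin j → Fin N) : (∑ a ∈ s, f a) w = ∑ a ∈ s, f a w := by
  classical
  induction s using Finset.cons_induction with
  | empty => simp
  | cons a s ha ih => rw [Finset.sum_cons, Finset.sum_cons, PiLp.add_apply, ih]

lemma chain_eval (z : Fin N → ℂ) : ∀ (j : ℕ) (y : Vsp N Y j),
    chainMul (Ysp := fun j => Vsp N Y j) (Lop N Y) z j y default
      = ∑ w : Fin j → Fin N, (∏ i, z (w i)) • y w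
  | 0, y => by
    rw [Fintype.sum_unique]
    simp [chainMul]
  | (j + 1), y => by
    have ih := chain_eval z j (pencil (Lop N Y j) z y)
    have hpen : ∀ w : Fin j → Fin N,
        (pencil (Lop N Y j) z y) w = ∑ k, z k • y (Fin.cons k w) := by
      intro w
      show ((∑ k, z k • Lop N Y j k) y) w = _
      rw [ContinuousLinearMap.sum_apply, Vsp_sum_apply]
      refine Finset.sum_congr rfl fun k _ => ?_
      rw [ContinuousLinearMap.smul_apply, PiLp.smul_apply, Lop_apply]
    have hL : chainMul (Ysp := fun j => Vsp N Y j) (Lop N Y) z (j + 1) y default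
        = chainMul (Ysp := fun j => Vsp N Y j) (Lop N Y) z j (pencil (Lop N Y j) z y) default := rfl
    rw [hL, ih]
    rw [← (Fin.consEquiv (fun _ : Fin (j + 1) => Fin N)).sum_comp, Fintype.sum_prod_type]
    rw [Finset.sum_comm]
    refine Finset.sum_congr rfl fun w _ => ?_
    rw [hpen w, Finset.smul_sum]
    refine Finset.sum_congr rfl fun k _ => ?_
    have hprod : (∏ i, z ((Fin.consEquiv (fun _ : Fin (j + 1) => Fin N)) (k, w) i))
        = z k * ∏ i, z (w i) := by
      simp only [Fin.consEquiv_apply]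
      rw [show (fun i => z (Fin.cons (α := fun _ => Fin N) k w i)) = Fin.cons (z k) (fun i => z (w i)) from
        funext fun i => by refine Fin.cases ?_ ?_ i <;> simp]
      exact Fin.prod_cons _ _
    have hy : y ((Fin.consEquiv (fun _ : Fin (j + 1) => Fin N)) (k, w)) = y (Fin.cons k w) := rfl
    rw [hprod, hy, smul_smul, mul_comm]

end spaces
end LLFE


set_option maxHeartbeats 1000000 in
/-- Theorem `thm:left`: a holomorphic operator-valued function with a zero of
multiplicity `m > 0` at the origin factors as a product of `m` linear homogeneous factors
along a chain of separable Hilbert spaces, times a holomorphic function not vanishing at `0`. -/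
theorem left_linear_factor_extraction {N m : ℕ} {U Y : Type}
    [NormedAddCommGroup U] [InnerProductSpace ℂ U] [CompleteSpace U]
    [TopologicalSpace.SeparableSpace U]
    [NormedAddCommGroup Y] [InnerProductSpace ℂ Y] [CompleteSpace Y]
    [TopologicalSpace.SeparableSpace Y]
    (θ : (Fin N → ℂ) → (U →L[ℂ] Y)) (hm : 0 < m) (hθ : HasZeroOfOrder θ m) :
    ∃ (Ysp : ℕ → HilbertSp) (e : (Ysp 0).carrier ≃ₗᵢ[ℂ] Y)
      (L : (j : ℕ) → Fin N → ((Ysp (j + 1)).carrier →L[ℂ] (Ysp j).carrier))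
      (φ : (Fin N → ℂ) → (U →L[ℂ] (Ysp m).carrier)),
      AnalyticAt ℂ φ 0 ∧ φ 0 ≠ 0 ∧
        ∀ᶠ z in nhds 0, θ z =
          (e.toLinearIsometry.toContinuousLinearMap.comp
            (chainMul (Ysp := fun j => (Ysp j).carrier) L z m)).comp (φ z) := by
  classical
  obtain ⟨p, hp, hvan, z₀, hz₀⟩ := hθ
  obtain ⟨r, hball⟩ := hp
  have hprad : 0 < p.radius := lt_of_lt_of_le hball.r_pos hball.r_le
  set b : Fin N → (Fin N → ℂ) := fun k => Pi.single k 1 with hbdef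
  have hb : ∀ k, ‖b k‖ ≤ 1 := by
    intro k
    refine (pi_norm_le_iff_of_nonneg zero_le_one).2 fun i => ?_
    by_cases h : i = k <;> simp [hbdef, Pi.single_apply, h]
  have hbx : ∀ z : Fin N → ℂ, (∑ k, z k • b k) = z := by
    intro z; funext i
    rw [Finset.sum_apply]
    simp [hbdef, Pi.single_apply, mul_ite]
  set P : (Fin m → Fin N) → FormalMultilinearSeries ℂ (Fin N → ℂ) (U →L[ℂ] Y) :=
    fun w => LLFE.sliceWord m (fun i => b (w i)) p with hPdef
  have hPrad : ∀ w, 0 < (P w).radius := fun w =>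
    LLFE.sliceWord_radius_pos m _ (fun i => hb _) p hprad
  set ψ : (Fin m → Fin N) → (Fin N → ℂ) → (U →L[ℂ] Y) := fun w => (P w).sum with hψdef
  have hψball : ∀ w, HasFPowerSeriesOnBall (ψ w) (P w) 0 ((P w).radius) := fun w =>
    (P w).hasFPowerSeriesOnBall (hPrad w)
  set Vm := LLFE.Vsp N Y m with hVmdef
  set φ : (Fin N → ℂ) → (U →L[ℂ] Vm) := fun z =>
    ∑ w : Fin m → Fin N, (ContinuousLinearMap.compL ℂ U Y Vm (LLFE.iota N Y m w)) (ψ w z)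
    with hφdef
  have hφcomp : ∀ z u (w : Fin m → Fin N), (φ z u) w = ψ w z u := by
    intro z u w
    show ((∑ w' : Fin m → Fin N,
        (ContinuousLinearMap.compL ℂ U Y Vm (LLFE.iota N Y m w')) (ψ w' z)) u) w = _
    rw [ContinuousLinearMap.sum_apply, LLFE.Vsp_sum_apply]
    have hterm : ∀ w' : Fin m → Fin N,
        ((ContinuousLinearMap.compL ℂ U Y Vm (LLFE.iota N Y m w')) (ψ w' z) u) w
          = if w = w' then ψ w' z u else 0 := by
      intro w'
      rw [ContinuousLinearMap.compL_apply, ContinuousLinearMap.comp_apply, LLFE.iota_apply]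
    rw [Finset.sum_congr rfl fun w' _ => hterm w']
    simp [Finset.sum_ite_eq]
  have hφan : AnalyticAt ℂ φ 0 := by
    rw [hφdef]
    refine Finset.analyticAt_fun_sum _ fun w _ => ?_
    exact ((ContinuousLinearMap.compL ℂ U Y Vm (LLFE.iota N Y m w)).analyticAt _).comp
      ((hψball w).analyticAt)
  have hψ0 : ∀ w, ψ w 0 = P w 0 (fun _ => (0 : Fin N → ℂ)) := by
    intro w
    have h1 : HasSum (fun n => P w n (fun _ => (0 : Fin N → ℂ))) (ψ w (0 + 0)) :=
      (hψball w).hasSum (EMetric.mem_ball_self (hPrad w))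
    rw [zero_add] at h1
    have h2 : HasSum (fun n => P w n (fun _ => (0 : Fin N → ℂ)))
        (P w 0 (fun _ => (0 : Fin N → ℂ))) := by
      refine hasSum_single 0 fun n hn => ?_
      obtain ⟨n', rfl⟩ : ∃ n', n = n' + 1 :=
        ⟨n - 1, (Nat.succ_pred_eq_of_pos (Nat.pos_of_ne_zero hn)).symm⟩
      exact (P w (n' + 1)).map_coord_zero 0 rfl
    exact h1.unique h2
  have hcast : ∀ (n1 n2 : ℕ), n1 = n2 → ∀ z : Fin N → ℂ,
      p n1 (fun _ => z) = p n2 (fun _ => z) := by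
    rintro n1 n2 rfl z; rfl
  have hφ0 : φ 0 ≠ 0 := by
    intro h0
    have hψz : ∀ w, ψ w 0 = 0 := by
      intro w
      ext u
      have hc := hφcomp 0 u w
      rw [h0] at hc
      simpa using hc.symm
    have key : p m (fun _ => z₀) = 0 := by
      have hsw : ∑ w : Fin m → Fin N, (∏ i, z₀ (w i)) • (P w 0 (fun _ => z₀))
          = p (0 + m) (fun _ => z₀) := LLFE.sliceWord_sum m z₀ b z₀ (hbx z₀) p 0
      have hterm : ∀ w : Fin m → Fin N, P w 0 (fun _ => z₀) = 0 := by
        intro w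
        have he : P w 0 (fun _ => z₀) = P w 0 (fun _ => (0 : Fin N → ℂ)) :=
          congrArg (P w 0) (Subsingleton.elim _ _)
        rw [he, ← hψ0 w, hψz w]
      rw [hcast m (0 + m) (Nat.zero_add m).symm z₀, ← hsw]
      exact Finset.sum_eq_zero fun w _ => by rw [hterm w, smul_zero]
    exact hz₀ key
  refine ⟨fun j => LLFE.hilb N Y j, LLFE.eZero N Y, LLFE.Lop N Y, φ, hφan, hφ0, ?_⟩
  have hball_ev : ∀ᶠ z in nhds (0 : Fin N → ℂ), z ∈ EMetric.ball (0 : Fin N → ℂ) r :=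
    EMetric.ball_mem_nhds 0 hball.r_pos
  have hrad_ev : ∀ᶠ z in nhds (0 : Fin N → ℂ),
      ∀ w : Fin m → Fin N, z ∈ EMetric.ball (0 : Fin N → ℂ) ((P w).radius) :=
    Filter.eventually_all.2 fun w => EMetric.ball_mem_nhds 0 (hPrad w)
  filter_upwards [hball_ev, hrad_ev] with z hz1 hz2
  have h1 : HasSum (fun n => p n (fun _ => z)) (θ z) := by
    have := hball.hasSum hz1; rwa [zero_add] at this
  have h2 : HasSum (fun n => p (n + m) (fun _ => z)) (θ z) := by
    refine (hasSum_nat_add_iff (f := fun n => p n (fun _ => z)) m).2 ?_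
    have hzero : (∑ i ∈ Finset.range m, p i (fun _ => z)) = 0 :=
      Finset.sum_eq_zero fun i hi => hvan i (Finset.mem_range.1 hi) z
    rw [hzero, add_zero]; exact h1
  have h3 : ∀ w, HasSum (fun n => P w n (fun _ => z)) (ψ w z) := by
    intro w
    have := (hψball w).hasSum (hz2 w); rwa [zero_add] at this
  have h4 : HasSum (fun n => ∑ w : Fin m → Fin N, (∏ i, z (w i)) • P w n (fun _ => z))
      (∑ w : Fin m → Fin N, (∏ i, z (w i)) • ψ w z) :=
    hasSum_sum fun w _ => (h3 w).const_smul _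
  have h5 : (fun n => ∑ w : Fin m → Fin N, (∏ i, z (w i)) • P w n (fun _ => z))
      = fun n => p (n + m) (fun _ => z) :=
    funext fun n => LLFE.sliceWord_sum m z b z (hbx z) p n
  rw [h5] at h4
  have hkey : θ z = ∑ w : Fin m → Fin N, (∏ i, z (w i)) • ψ w z := h2.unique h4
  refine ContinuousLinearMap.ext fun u => ?_
  have hRHS : (LLFE.eZero N Y) (chainMul (Ysp := fun j => LLFE.Vsp N Y j)
        (LLFE.Lop N Y) z m (φ z u))
      = ∑ w : Fin m → Fin N, (∏ i, z (w i)) • (ψ w z u) := by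
    rw [LLFE.eZero_apply, LLFE.chain_eval N Y z m (φ z u)]
    refine Finset.sum_congr rfl fun w _ => ?_
    rw [hφcomp z u w]
  have hLHS : (∑ w : Fin m → Fin N, (∏ i, z (w i)) • ψ w z) u
      = ∑ w : Fin m → Fin N, (∏ i, z (w i)) • (ψ w z u) := by
    rw [ContinuousLinearMap.sum_apply]
    exact Finset.sum_congr rfl fun w _ => rfl
  calc θ z u = (∑ w : Fin m → Fin N, (∏ i, z (w i)) • ψ w z) u := by rw [hkey]
  _ = ∑ w : Fin m → Fin N, (∏ i, z (w i)) • (ψ w z u) := hLHS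
  _ = (LLFE.eZero N Y) (chainMul (Ysp := fun j => LLFE.Vsp N Y j)
        (LLFE.Lop N Y) z m (φ z u)) := hRHS.symm
  _ = _ := rfl
end
end

section
/- Let θ(z) = zD + zC(I_X − zA)^{-1} zB be the transfer function of an N-parametric linear system with state space X, input space U, output space Y, defined on a neighborhood of 0 where I_X − zA is invertible. If θ has a zero of multiplicity m > 1 at z = 0, then D_k = 0 for all k and θ(z) = zC (zA)^{m−2} (I_X − zA)^{-1} zB on that neighborhood; moreover zC (zA)^j zB = 0 identically for all 0 ≤ j < m − 2. -/
noncomputable section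

open scoped ComplexConjugate

variable {N : ℕ}

section AuxLemmas

variable {N : ℕ}

lemma pencil_smul_arg {E F : Type*} [NormedAddCommGroup E] [NormedAddCommGroup F]
    [NormedSpace ℂ E] [NormedSpace ℂ F]
    (T : Fin N → (E →L[ℂ] F)) (t : ℂ) (z : Fin N → ℂ) :
    pencil T (t • z) = t • pencil T z := by
  simp only [pencil, Pi.smul_apply, smul_eq_mul, Finset.smul_sum, smul_smul]

/-- geometric tail identity for `Ring.inverse (1 - T)` -/
lemma ring_inverse_one_sub_eq {R : Type*} [Ring R] (T : R) (h : IsUnit (1 - T)) (n : ℕ) :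
    Ring.inverse (1 - T) =
      (∑ i ∈ Finset.range n, T ^ i) + T ^ n * Ring.inverse (1 - T) := by
  have h1 : (∑ i ∈ Finset.range n, T ^ i) * (1 - T) = 1 - T ^ n := by
    have h2 := geom_sum_mul T n
    have h3 : (∑ i ∈ Finset.range n, T ^ i) * (1 - T)
        = -((∑ i ∈ Finset.range n, T ^ i) * (T - 1)) := by noncomm_ring
    rw [h3, h2, neg_sub]
  have h2 : (∑ i ∈ Finset.range n, T ^ i) = (1 - T ^ n) * Ring.inverse (1 - T) := by
    rw [← h1, mul_assoc, Ring.mul_inverse_cancel _ h, mul_one]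
  calc Ring.inverse (1 - T)
      = ((1 - T ^ n) + T ^ n) * Ring.inverse (1 - T) := by rw [sub_add_cancel, one_mul]
    _ = (1 - T ^ n) * Ring.inverse (1 - T) + T ^ n * Ring.inverse (1 - T) := by rw [add_mul]
    _ = _ := by rw [← h2]

/-- A function given as a convergent power series in one complex variable with coefficients of
at most geometric growth has a formal power series expansion at `0`. -/
lemma hasFPowerSeriesAt_of_hasSum {E : Type*} [NormedAddCommGroup E] [NormedSpace ℂ E]
    (f : ℂ → E) (coef : ℕ → E) (M rb ε : ℝ) (hrb : 0 < rb) (hε : 0 < ε)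
    (hb : ∀ n, ‖coef n‖ * rb ^ n ≤ M)
    (hsum : ∀ t : ℂ, ‖t‖ < ε → HasSum (fun n => t ^ n • coef n) (f t)) :
    HasFPowerSeriesAt f
      (fun n => ContinuousMultilinearMap.mkPiRing ℂ (Fin n) (coef n)) 0 := by
  have hr0 : (0:ℝ) < min rb ε := lt_min hrb hε
  refine ⟨(min rb ε).toNNReal, ?_, ?_, ?_⟩
  · apply FormalMultilinearSeries.le_radius_of_bound _ M
    intro n
    have hcoe : ((min rb ε).toNNReal : ℝ) = min rb ε := Real.coe_toNNReal _ hr0.le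
    calc ‖ContinuousMultilinearMap.mkPiRing ℂ (Fin n) (coef n)‖ * ((min rb ε).toNNReal : ℝ) ^ n
        = ‖coef n‖ * (min rb ε) ^ n := by
          rw [ContinuousMultilinearMap.norm_mkPiRing, hcoe]
      _ ≤ ‖coef n‖ * rb ^ n := by
          gcongr
          exact min_le_left _ _
      _ ≤ M := hb n
  · exact_mod_cast Real.toNNReal_pos.mpr hr0
  · intro y hy
    rw [mem_emetric_ball_zero_iff, enorm_eq_nnnorm, ENNReal.coe_lt_coe] at hy
    have hy' : ‖y‖ < min rb ε := by
      have h2 := NNReal.coe_lt_coe.mpr hy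
      rwa [coe_nnnorm, Real.coe_toNNReal _ hr0.le] at h2
    have h3 := hsum y (hy'.trans_le (min_le_right _ _))
    simp only [zero_add]
    simpa [ContinuousMultilinearMap.mkPiRing_apply, Finset.prod_const] using h3

/-- the homogeneous (diagonal) coefficients of the transfer function -/
def dcoef {N : ℕ} {X U Y : Type*} [NormedAddCommGroup X] [NormedAddCommGroup U]
    [NormedAddCommGroup Y] [NormedSpace ℂ X] [NormedSpace ℂ U] [NormedSpace ℂ Y]
    (A : Fin N → (X →L[ℂ] X)) (B : Fin N → (U →L[ℂ] X)) (C : Fin N → (X →L[ℂ] Y))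
    (D : Fin N → (U →L[ℂ] Y)) (z : Fin N → ℂ) : ℕ → (U →L[ℂ] Y)
  | 0 => 0
  | 1 => pencil D z
  | (j+2) => (pencil C z).comp (((pencil A z) ^ j).comp (pencil B z))

set_option maxHeartbeats 1000000 in
lemma dcoef_vanish {N m : ℕ} {X U Y : Type*}
    [NormedAddCommGroup X] [NormedSpace ℂ X] [CompleteSpace X]
    [NormedAddCommGroup U] [NormedSpace ℂ U]
    [NormedAddCommGroup Y] [NormedSpace ℂ Y] [CompleteSpace Y]
    (A : Fin N → (X →L[ℂ] X)) (B : Fin N → (U →L[ℂ] X)) (C : Fin N → (X →L[ℂ] Y))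
    (D : Fin N → (U →L[ℂ] Y)) (θ : (Fin N → ℂ) → (U →L[ℂ] Y))
    (hθ : ∀ᶠ z in nhds 0, IsUnit (1 - pencil A z) ∧ θ z = transfer A B C D z)
    (p : FormalMultilinearSeries ℂ (Fin N → ℂ) (U →L[ℂ] Y))
    (hp : HasFPowerSeriesAt θ p 0)
    (hvan : ∀ j, j < m → ∀ z : Fin N → ℂ, (p j) (fun _ => z) = 0)
    (z : Fin N → ℂ) (n : ℕ) (hn : n < m) : dcoef A B C D z n = 0 := by
  classical
  set T := pencil A z with hTdef
  set L := pencil C z with hLdef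
  set R := pencil B z with hRdef
  set d := pencil D z with hddef
  obtain ⟨ε, hε, hball⟩ := Metric.eventually_nhds_iff.mp hθ
  set ρ : ℝ := max ‖T‖ 1 with hρdef
  have hρ1 : (1:ℝ) ≤ ρ := le_max_right _ _
  have hρ0 : (0:ℝ) < ρ := lt_of_lt_of_le one_pos hρ1
  set M : ℝ := max ‖d‖ (‖L‖ * ‖R‖) + 1 with hMdef
  have hM0 : (0:ℝ) ≤ M := by positivity
  have hpow : ∀ j : ℕ, ‖T ^ j‖ ≤ ρ ^ j := by
    intro j
    induction j with
    | zero =>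
      rw [pow_zero, pow_zero]; exact ContinuousLinearMap.norm_id_le
    | succ j ih =>
      calc ‖T ^ (j+1)‖ = ‖T ^ j * T‖ := by rw [pow_succ]
        _ ≤ ‖T ^ j‖ * ‖T‖ := norm_mul_le _ _
        _ ≤ ρ ^ j * ρ := by
            gcongr
            exact le_max_left _ _
        _ = ρ ^ (j+1) := (pow_succ ρ j).symm
  have hinvle : ρ⁻¹ ≤ 1 := by
    rw [← inv_one]
    gcongr
  have hbA : ∀ k, ‖dcoef A B C D z k‖ * (ρ⁻¹) ^ k ≤ M := by
    intro k
    match k with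
    | 0 => simpa [dcoef] using hM0
    | 1 =>
      have : ‖d‖ * ρ⁻¹ ≤ ‖d‖ * 1 := by
        gcongr
      calc ‖dcoef A B C D z 1‖ * (ρ⁻¹) ^ 1 = ‖d‖ * ρ⁻¹ := by simp [dcoef, hddef]
        _ ≤ ‖d‖ * 1 := this
        _ = ‖d‖ := mul_one _
        _ ≤ M := by
            rw [hMdef]
            have := le_max_left ‖d‖ (‖L‖ * ‖R‖)
            linarith
    | (j+2) =>
      have hnorm : ‖L.comp ((T ^ j).comp R)‖ ≤ ‖L‖ * (ρ ^ j * ‖R‖) := by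
        calc ‖L.comp ((T ^ j).comp R)‖ ≤ ‖L‖ * ‖(T ^ j).comp R‖ :=
              ContinuousLinearMap.opNorm_comp_le _ _
          _ ≤ ‖L‖ * (‖T ^ j‖ * ‖R‖) := by
              gcongr
              exact ContinuousLinearMap.opNorm_comp_le _ _
          _ ≤ ‖L‖ * (ρ ^ j * ‖R‖) := by
              gcongr
              exact hpow j
      have hb2 : ρ ^ j * (ρ⁻¹) ^ j = 1 := by
        rw [← mul_pow, mul_inv_cancel₀ hρ0.ne', one_pow]
      have hu2 : (ρ⁻¹) ^ 2 ≤ 1 := pow_le_one₀ (by positivity) hinvle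
      calc ‖dcoef A B C D z (j+2)‖ * (ρ⁻¹) ^ (j + 2)
          = ‖L.comp ((T ^ j).comp R)‖ * (ρ⁻¹) ^ (j + 2) := by rfl
        _ ≤ (‖L‖ * (ρ ^ j * ‖R‖)) * (ρ⁻¹) ^ (j + 2) := by
            gcongr
        _ = (‖L‖ * ‖R‖) * ((ρ ^ j * (ρ⁻¹) ^ j) * (ρ⁻¹) ^ 2) := by ring
        _ = (‖L‖ * ‖R‖) * (ρ⁻¹) ^ 2 := by rw [hb2, one_mul]
        _ ≤ (‖L‖ * ‖R‖) * 1 := by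
            gcongr
        _ = ‖L‖ * ‖R‖ := mul_one _
        _ ≤ M := by
            rw [hMdef]
            have := le_max_right ‖d‖ (‖L‖ * ‖R‖)
            linarith
  set εA : ℝ := min ρ⁻¹ (ε / (‖z‖ + 1)) with hεAdef
  have hεA : (0:ℝ) < εA := by positivity
  have hsumA : ∀ t : ℂ, ‖t‖ < εA →
      HasSum (fun k => t ^ k • dcoef A B C D z k) (θ (t • z)) := by
    intro t ht
    have htρ : ‖t‖ < ρ⁻¹ := lt_of_lt_of_le ht (min_le_left _ _)
    have htz : ‖t • z‖ < ε := by
      rw [norm_smul]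
      have h1 : ‖t‖ < ε / (‖z‖ + 1) := lt_of_lt_of_le ht (min_le_right _ _)
      calc ‖t‖ * ‖z‖ ≤ ‖t‖ * (‖z‖ + 1) := by
            gcongr
            linarith
        _ < ε / (‖z‖ + 1) * (‖z‖ + 1) := by
            apply mul_lt_mul_of_pos_right h1
            positivity
        _ = ε := div_mul_cancel₀ _ (by positivity)
    obtain ⟨hu, heq⟩ := hball (by simpa [dist_zero_right] using htz)
    have hsT : ‖t • T‖ < 1 := by
      refine lt_of_le_of_lt (norm_smul_le t T) ?_
      calc ‖t‖ * ‖T‖ ≤ ‖t‖ * ρ := by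
            gcongr
            exact le_max_left _ _
        _ < ρ⁻¹ * ρ := mul_lt_mul_of_pos_right htρ hρ0
        _ = 1 := inv_mul_cancel₀ hρ0.ne'
    have hval : θ (t • z) = t • d +
        t ^ 2 • (L.comp ((Ring.inverse (1 - t • T)).comp R)) := by
      rw [heq]
      unfold transfer
      rw [pencil_smul_arg, pencil_smul_arg, pencil_smul_arg, pencil_smul_arg]
      rw [← hTdef, ← hLdef, ← hRdef, ← hddef]
      congr 1
      rw [ContinuousLinearMap.smul_comp, ContinuousLinearMap.comp_smul, ContinuousLinearMap.comp_smul, smul_smul, ← sq]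
    have hgeo : HasSum (fun j : ℕ => (t • T) ^ j) (Ring.inverse (1 - t • T)) :=
      hasSum_geom_series_inverse _ hsT
    set Φ : (X →L[ℂ] X) →L[ℂ] (U →L[ℂ] Y) :=
      (ContinuousLinearMap.compL ℂ U X Y L).comp
        ((ContinuousLinearMap.compL ℂ U X X).flip R) with hΦdef
    have hΦ : ∀ S : X →L[ℂ] X, Φ S = L.comp (S.comp R) := fun S => rfl
    have h2 := (Φ.hasSum hgeo).const_smul (t ^ 2)
    have h3 : (fun j : ℕ => t ^ 2 • Φ ((t • T) ^ j))
        = fun j : ℕ => t ^ (j + 2) • dcoef A B C D z (j + 2) := by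
      funext j
      rw [hΦ, smul_pow, ContinuousLinearMap.smul_comp, ContinuousLinearMap.comp_smul,
        smul_smul, ← pow_add, add_comm 2 j]
      rfl
    rw [h3, hΦ] at h2
    apply (hasSum_nat_add_iff' 2).mp
    have hsub : θ (t • z) - ∑ i ∈ Finset.range 2, t ^ i • dcoef A B C D z i
        = t ^ 2 • (L.comp ((Ring.inverse (1 - t • T)).comp R)) := by
      rw [hval]
      simp only [Finset.sum_range_succ, Finset.sum_range_zero, zero_add, pow_zero, pow_one]
      show t • d + _ - ((1:ℂ) • (0:U →L[ℂ] Y) + t • d) = _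
      rw [smul_zero, zero_add]
      abel
    rw [hsub]
    exact h2
  have hA : HasFPowerSeriesAt (fun t : ℂ => θ (t • z))
      (fun k => ContinuousMultilinearMap.mkPiRing ℂ (Fin k) (dcoef A B C D z k)) 0 :=
    hasFPowerSeriesAt_of_hasSum _ _ M ρ⁻¹ εA (by positivity) hεA hbA hsumA
  -- the power series coming from `p`
  obtain ⟨rq, hpb⟩ := hp
  obtain ⟨rn, hrn0, hrnlt⟩ := ENNReal.lt_iff_exists_nnreal_btwn.mp hpb.r_pos
  have hrnN : (0:NNReal) < rn := ENNReal.coe_pos.mp hrn0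
  have hrnR : (0:ℝ) < rn := hrnN
  have hrrad : (rn : ENNReal) < p.radius := lt_of_lt_of_le hrnlt hpb.r_le
  obtain ⟨Cp, hCp0, hCp⟩ := p.norm_mul_pow_le_of_lt_radius hrrad
  set a : ℕ → (U →L[ℂ] Y) := fun k => p k (fun _ => z) with hadef
  set εB : ℝ := (rn : ℝ) / (‖z‖ + 1) with hεBdef
  have hεB : (0:ℝ) < εB := by positivity
  have hzb : ‖z‖ * εB ≤ rn := by
    rw [hεBdef]
    calc ‖z‖ * ((rn:ℝ) / (‖z‖ + 1)) = ‖z‖ / (‖z‖ + 1) * rn := by ring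
      _ ≤ 1 * rn := by
          gcongr
          apply div_le_one_of_le₀ (by linarith) (by positivity)
      _ = rn := one_mul _
  have hbB : ∀ k, ‖a k‖ * εB ^ k ≤ Cp := by
    intro k
    have h1 : ‖a k‖ ≤ ‖p k‖ * ‖z‖ ^ k := by
      calc ‖a k‖ ≤ ‖p k‖ * ∏ _i : Fin k, ‖z‖ := (p k).le_opNorm _
        _ = ‖p k‖ * ‖z‖ ^ k := by simp [Finset.prod_const]
    calc ‖a k‖ * εB ^ k ≤ (‖p k‖ * ‖z‖ ^ k) * εB ^ k := by
          gcongr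
      _ = ‖p k‖ * (‖z‖ * εB) ^ k := by rw [mul_pow, mul_assoc]
      _ ≤ ‖p k‖ * (rn:ℝ) ^ k := by
          gcongr
      _ ≤ Cp := hCp k
  have hpball : HasFPowerSeriesOnBall θ p 0 rn := hpb.mono hrn0 hrnlt.le
  have hsumB : ∀ t : ℂ, ‖t‖ < εB → HasSum (fun k => t ^ k • a k) (θ (t • z)) := by
    intro t ht
    have hmem : t • z ∈ Metric.eball (0 : Fin N → ℂ) rn := by
      rw [mem_emetric_ball_zero_iff, enorm_eq_nnnorm, ENNReal.coe_lt_coe, ← NNReal.coe_lt_coe, coe_nnnorm]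
      rw [norm_smul]
      calc ‖t‖ * ‖z‖ ≤ ‖t‖ * (‖z‖ + 1) := by
            gcongr
            linarith
        _ < εB * (‖z‖ + 1) := mul_lt_mul_of_pos_right ht (by positivity)
        _ = rn := by
            rw [hεBdef]
            field_simp
    have h4 := hpball.hasSum hmem
    rw [zero_add] at h4
    have hfun : (fun k => p k fun _ => t • z) = fun k => t ^ k • a k := by
      funext k
      have h5 := (p k).map_smul_univ (fun _ : Fin k => t) (fun _ : Fin k => z)
      simpa [Finset.prod_const] using h5
    rwa [hfun] at h4
  have hB : HasFPowerSeriesAt (fun t : ℂ => θ (t • z))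
      (fun k => ContinuousMultilinearMap.mkPiRing ℂ (Fin k) (a k)) 0 :=
    hasFPowerSeriesAt_of_hasSum _ _ Cp εB εB hεB hεB hbB hsumB
  have heqs := hA.eq_formalMultilinearSeries hB
  have h6 := congrFun heqs n
  have h7 := congrArg
    (fun (q : ContinuousMultilinearMap ℂ (fun _ : Fin n => ℂ) (U →L[ℂ] Y)) =>
      q (fun _ => 1)) h6
  simp only [ContinuousMultilinearMap.mkPiRing_apply, Finset.prod_const, one_pow,
    one_smul] at h7
  rw [h7]
  exact hvan n hn z

end AuxLemmas

/-- if the transfer function `θ(z) = zD + zC(I − zA)⁻¹zB` of an `N`-parametric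
system has a zero of multiplicity `m > 1` at `z = 0`, then `D = 0`,
`θ(z) = zC (zA)^{m−2} (I − zA)⁻¹ zB` near `0`, and `zC (zA)^j zB ≡ 0` for all `j < m − 2`. -/
theorem transfer_function_multiple_zero {N m : ℕ} {X U Y : Type}
    [NormedAddCommGroup X] [InnerProductSpace ℂ X] [CompleteSpace X]
    [TopologicalSpace.SeparableSpace X]
    [NormedAddCommGroup U] [InnerProductSpace ℂ U] [CompleteSpace U]
    [TopologicalSpace.SeparableSpace U]
    [NormedAddCommGroup Y] [InnerProductSpace ℂ Y] [CompleteSpace Y]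
    [TopologicalSpace.SeparableSpace Y]
    (A : Fin N → (X →L[ℂ] X)) (B : Fin N → (U →L[ℂ] X)) (C : Fin N → (X →L[ℂ] Y))
    (D : Fin N → (U →L[ℂ] Y)) (θ : (Fin N → ℂ) → (U →L[ℂ] Y))
    (hθ : ∀ᶠ z in nhds 0, IsUnit (1 - pencil A z) ∧ θ z = transfer A B C D z)
    (hm : 1 < m) (hzero : HasZeroOfOrder θ m) :
    (∀ k, D k = 0) ∧
      (∀ᶠ z in nhds 0, θ z =
        (pencil C z).comp ((((pencil A z) ^ (m - 2)).comp
          (Ring.inverse (1 - pencil A z))).comp (pencil B z))) ∧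
      (∀ j, j < m - 2 → ∀ z : Fin N → ℂ,
        (pencil C z).comp (((pencil A z) ^ j).comp (pencil B z)) = 0) := by
  obtain ⟨p, hp, hvan, -⟩ := hzero
  have key : ∀ z : Fin N → ℂ, ∀ n, n < m → dcoef A B C D z n = 0 :=
    fun z n hn => dcoef_vanish A B C D θ hθ p hp hvan z n hn
  have hD : ∀ k, D k = 0 := by
    intro k
    have h1 := key (Pi.single k 1) 1 hm
    have h2 : dcoef A B C D (Pi.single k 1) 1 = pencil D (Pi.single k 1) := rfl
    rw [h2] at h1
    rw [pencil] at h1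
    rwa [Finset.sum_eq_single k (fun i _ hi => by simp [Pi.single_apply, hi])
      (fun h => absurd (Finset.mem_univ k) h), Pi.single_eq_same, one_smul] at h1
  have h3 : ∀ j, j < m - 2 → ∀ z : Fin N → ℂ,
      (pencil C z).comp (((pencil A z) ^ j).comp (pencil B z)) = 0 := by
    intro j hj z
    have := key z (j + 2) (by omega)
    exact this
  refine ⟨hD, ?_, h3⟩
  filter_upwards [hθ] with z hz
  obtain ⟨hu, heq⟩ := hz
  have hDz : pencil D z = 0 := by simp [pencil, hD]
  have hzero1 : (pencil C z).comp
      ((∑ i ∈ Finset.range (m - 2), (pencil A z) ^ i).comp (pencil B z)) = 0 := by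
    rw [ContinuousLinearMap.finset_sum_comp, ContinuousLinearMap.comp_finset_sum]
    exact Finset.sum_eq_zero fun i hi => h3 i (Finset.mem_range.mp hi) z
  rw [heq]
  unfold transfer
  rw [hDz, zero_add]
  conv_lhs => rw [ring_inverse_one_sub_eq (pencil A z) hu (m - 2)]
  rw [ContinuousLinearMap.add_comp, ContinuousLinearMap.comp_add, hzero1, zero_add,
    ContinuousLinearMap.mul_def]
end
end

section
/- Any homogeneous operator-valued polynomial θ(z) of degree m > 0 in z ∈ ℂ^N with values in [U,Y] factors as a product of homogeneous linear factors: there exist separable Hilbert spaces Y⁽⁰⁾ = Y, Y⁽¹⁾,…,Y⁽ᵐ⁾ = U and operators L_k^{(j)} : Y⁽ʲ⁾ → Y⁽ʲ⁻¹⁾ such that θ(z) = (zL⁽¹⁾)(zL⁽²⁾)⋯(zL⁽ᵐ⁾) for all z ∈ ℂ^N. -/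
noncomputable section

open scoped ComplexConjugate

variable {N : ℕ}

lemma chainMul_peel {Ysp : ℕ → Type*} [∀ j, NormedAddCommGroup (Ysp j)]
    [∀ j, NormedSpace ℂ (Ysp j)]
    (L : (j : ℕ) → Fin N → (Ysp (j + 1) →L[ℂ] Ysp j)) (z : Fin N → ℂ) :
    ∀ m : ℕ, chainMul L z (m + 1) =
      (pencil (L 0) z).comp
        (chainMul (Ysp := fun j => Ysp (j + 1)) (fun j => L (j + 1)) z m)
  | 0 => by simp [chainMul]
  | (m + 1) => by
      show (chainMul L z (m + 1)).comp (pencil (L (m + 1)) z) = _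
      rw [chainMul_peel L z m, ContinuousLinearMap.comp_assoc]
      rfl

lemma expand_first {n : ℕ} {W : Type*} [NormedAddCommGroup W] [NormedSpace ℂ W]
    (P : ContinuousMultilinearMap ℂ (fun _ : Fin (n + 1) => (Fin N → ℂ)) W)
    (z : Fin N → ℂ) (t : Fin n → (Fin N → ℂ)) :
    P (Fin.cons z t) = ∑ k, z k • P (Fin.cons (Pi.single k 1 : Fin N → ℂ) t) := by
  have hz : z = ∑ k, z k • (Pi.single k 1 : Fin N → ℂ) := by
    funext i
    simp [Finset.sum_apply, Pi.single_apply, mul_ite, Finset.sum_ite_eq']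
  have h1 : P.curryLeft (∑ k, z k • (Pi.single k 1 : Fin N → ℂ))
      = ∑ k, z k • P.curryLeft (Pi.single k 1 : Fin N → ℂ) := by
    rw [map_sum]
    exact Finset.sum_congr rfl fun k _ => P.curryLeft.map_smul _ _
  calc P (Fin.cons z t) = P.curryLeft z t := (P.curryLeft_apply z t).symm
    _ = (∑ k, z k • P.curryLeft (Pi.single k 1 : Fin N → ℂ)) t := by rw [← h1, ← hz]
    _ = ∑ k, z k • P (Fin.cons (Pi.single k 1 : Fin N → ℂ) t) := by
        simp [ContinuousMultilinearMap.sum_apply]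

lemma const_eq_cons {n : ℕ} {α : Type*} (z : α) :
    (fun _ : Fin (n + 1) => z) = Fin.cons z (fun _ : Fin n => z) := by
  funext i
  induction i using Fin.cases with
  | zero => simp
  | succ j => simp

theorem factor_aux (U : Type) [NormedAddCommGroup U] [InnerProductSpace ℂ U]
    [CompleteSpace U] [TopologicalSpace.SeparableSpace U] :
    ∀ (m : ℕ) (Y : Type) [NormedAddCommGroup Y] [InnerProductSpace ℂ Y]
      [CompleteSpace Y] [TopologicalSpace.SeparableSpace Y]
      (P : ContinuousMultilinearMap ℂ (fun _ : Fin (m + 1) => (Fin N → ℂ)) (U →L[ℂ] Y)),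
    ∃ (Ysp : ℕ → HilbertSp) (eY : (Ysp 0).carrier ≃ₗᵢ[ℂ] Y) (eU : U ≃ₗᵢ[ℂ] (Ysp (m + 1)).carrier)
      (L : (j : ℕ) → Fin N → ((Ysp (j + 1)).carrier →L[ℂ] (Ysp j).carrier)),
      ∀ z : Fin N → ℂ, P (fun _ => z) =
        (eY.toLinearIsometry.toContinuousLinearMap.comp
            ((chainMul (Ysp := fun j => (Ysp j).carrier) L z (m + 1)).comp
              eU.toLinearIsometry.toContinuousLinearMap)) := by
  intro m
  induction m with
  | zero =>
    intro Y _ _ _ _ P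
    refine ⟨fun j => Nat.casesOn j ⟨Y⟩ (fun _ => ⟨U⟩),
      LinearIsometryEquiv.refl ℂ Y, LinearIsometryEquiv.refl ℂ U,
      fun j => Nat.casesOn j (fun k => P (fun _ => Pi.single k 1)) (fun _ _ => 0), ?_⟩
    intro z
    ext u
    have h1 : P (fun _ => z) = ∑ k, z k • P (fun _ : Fin 1 => (Pi.single k 1 : Fin N → ℂ)) := by
      rw [const_eq_cons (n := 0) z, expand_first]
      refine Finset.sum_congr rfl fun k _ => ?_
      have hc : (Fin.cons (Pi.single k 1 : Fin N → ℂ) fun _ : Fin 0 => z)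
          = fun _ : Fin 1 => (Pi.single k 1 : Fin N → ℂ) := by
        funext i
        induction i using Fin.cases with
        | zero => simp
        | succ j => exact j.elim0
      rw [hc]
    simp only [h1, chainMul, pencil]
    simp [ContinuousLinearMap.sum_apply]
  | succ m ih =>
    intro Y iN iI iC iS P
    haveI : CompleteSpace (PiLp 2 (fun _ : Fin N => Y)) :=
      inferInstance
    haveI : TopologicalSpace.SeparableSpace (PiLp 2 (fun _ : Fin N => Y)) :=
      (PiLp.continuousLinearEquiv 2 ℂ (fun _ : Fin N => Y)).symm.surjective.denseRange.separableSpace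
        (PiLp.continuousLinearEquiv 2 ℂ (fun _ : Fin N => Y)).symm.continuous
    let ι : Fin N → (Y →L[ℂ] PiLp 2 (fun _ : Fin N => Y)) := fun k =>
      (((PiLp.continuousLinearEquiv 2 ℂ (fun _ : Fin N => Y)).symm :
          (∀ _ : Fin N, Y) →L[ℂ] PiLp 2 (fun _ : Fin N => Y))).comp
        (ContinuousLinearMap.pi (fun i => if i = k then ContinuousLinearMap.id ℂ Y else 0))
    let Q : ContinuousMultilinearMap ℂ (fun _ : Fin (m + 1) => (Fin N → ℂ))
        (U →L[ℂ] PiLp 2 (fun _ : Fin N => Y)) :=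
      ∑ k, (ContinuousLinearMap.compL ℂ U Y (PiLp 2 (fun _ : Fin N => Y))
          (ι k)).compContinuousMultilinearMap (P.curryLeft (Pi.single k 1 : Fin N → ℂ))
    obtain ⟨Ysp', eY', eU', L', hL'⟩ := ih (PiLp 2 (fun _ : Fin N => Y)) Q
    refine ⟨fun j => Nat.casesOn j ⟨Y⟩ (fun j' => Ysp' j'),
      LinearIsometryEquiv.refl ℂ Y, eU',
      fun j => Nat.casesOn j
        (fun k => (PiLp.proj 2 (fun _ : Fin N => Y) k : _ →L[ℂ] Y).comp
            eY'.toLinearIsometry.toContinuousLinearMap)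
        (fun j' => L' j'), ?_⟩
    intro z
    have key := chainMul_peel
      (Ysp := fun j => ((Nat.casesOn j ⟨Y⟩ (fun j' => Ysp' j') : HilbertSp)).carrier)
      (fun j => Nat.casesOn j
        (fun k => (PiLp.proj 2 (fun _ : Fin N => Y) k : _ →L[ℂ] Y).comp
            eY'.toLinearIsometry.toContinuousLinearMap)
        (fun j' => L' j')) z (m + 1)
    rw [key]
    ext u
    show P (fun _ => z) u =
      (pencil (fun k => (PiLp.proj 2 (fun _ : Fin N => Y) k : _ →L[ℂ] Y).comp
            eY'.toLinearIsometry.toContinuousLinearMap) z)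
        ((chainMul (Ysp := fun j => (Ysp' j).carrier) L' z (m + 1))
          (eU'.toLinearIsometry.toContinuousLinearMap u))
    set w := (chainMul (Ysp := fun j => (Ysp' j).carrier) L' z (m + 1))
      (eU'.toLinearIsometry.toContinuousLinearMap u) with hw
    have hQu : Q (fun _ => z) u = eY'.toLinearIsometry.toContinuousLinearMap w := by
      rw [hL' z]; rfl
    have hcoord : ∀ k, (PiLp.proj 2 (fun _ : Fin N => Y) k :
            PiLp 2 (fun _ : Fin N => Y) →L[ℂ] Y)
          (eY'.toLinearIsometry.toContinuousLinearMap w)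
        = (P (Fin.cons (Pi.single k 1 : Fin N → ℂ) (fun _ : Fin (m + 1) => z))) u := by
      intro k
      rw [← hQu]
      simp [Q, ι, ContinuousMultilinearMap.sum_apply, ContinuousLinearMap.sum_apply,
        map_sum, PiLp.proj_apply, PiLp.toLp_apply, PiLp.coe_symm_continuousLinearEquiv,
        ContinuousLinearMap.pi_apply]
      rw [Finset.sum_eq_single k]
      · simp
      · intro b _ hb
        simp [if_neg (Ne.symm hb)]
      · intro h
        exact absurd (Finset.mem_univ k) h
    have hrhs : (pencil (fun k => (PiLp.proj 2 (fun _ : Fin N => Y) k : _ →L[ℂ] Y).comp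
            eY'.toLinearIsometry.toContinuousLinearMap) z) w
        = ∑ k, z k • (P (Fin.cons (Pi.single k 1 : Fin N → ℂ) (fun _ : Fin (m + 1) => z))) u := by
      simp only [pencil, ContinuousLinearMap.sum_apply, ContinuousLinearMap.smul_apply,
        ContinuousLinearMap.comp_apply]
      exact Finset.sum_congr rfl fun k _ => by rw [hcoord k]
    rw [hrhs, const_eq_cons z, expand_first]
    simp [ContinuousLinearMap.sum_apply]

/-- Corollary `cor:pol`: every homogeneous operator-valued polynomial of
degree `m > 0` is a product `(zL⁽¹⁾)(zL⁽²⁾)⋯(zL⁽ᵐ⁾)` of linear homogeneous factors along a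
chain of separable Hilbert spaces with `Y⁽⁰⁾ = Y` and `Y⁽ᵐ⁾ = U`. -/
theorem homogeneous_polynomial_linear_factorization {N m : ℕ} {U Y : Type}
    [NormedAddCommGroup U] [InnerProductSpace ℂ U] [CompleteSpace U]
    [TopologicalSpace.SeparableSpace U]
    [NormedAddCommGroup Y] [InnerProductSpace ℂ Y] [CompleteSpace Y]
    [TopologicalSpace.SeparableSpace Y]
    (P : ContinuousMultilinearMap ℂ (fun _ : Fin m => (Fin N → ℂ)) (U →L[ℂ] Y))
    (hm : 0 < m) :
    ∃ (Ysp : ℕ → HilbertSp) (eY : (Ysp 0).carrier ≃ₗᵢ[ℂ] Y) (eU : U ≃ₗᵢ[ℂ] (Ysp m).carrier)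
      (L : (j : ℕ) → Fin N → ((Ysp (j + 1)).carrier →L[ℂ] (Ysp j).carrier)),
      ∀ z : Fin N → ℂ, P (fun _ => z) =
        (eY.toLinearIsometry.toContinuousLinearMap.comp
            ((chainMul (Ysp := fun j => (Ysp j).carrier) L z m).comp
              eU.toLinearIsometry.toContinuousLinearMap)) := by
  obtain ⟨n, rfl⟩ : ∃ n, m = n + 1 := ⟨m - 1, (Nat.succ_pred_eq_of_pos hm).symm⟩
  exact factor_aux U n Y P
end
end

section
/- Let α⁽¹⁾ and α⁽²⁾ be N-parametric linear systems with operator tuples (A⁽¹⁾,B⁽¹⁾,C⁽¹⁾,D⁽¹⁾) on spaces (X⁽¹⁾, U, V) and (A⁽²⁾,B⁽²⁾,C⁽²⁾,D⁽²⁾) on (X⁽²⁾, V, Y), and let α = α⁽²⁾α⁽¹⁾ be their cascade connection with state space X = X⁽²⁾ ⊕ V ⊕ X⁽¹⁾ defined by the block formula zG_α = [[zA⁽²⁾, zB⁽²⁾, 0, 0],[0,0,zC⁽¹⁾,zD⁽¹⁾],[0,0,zA⁽¹⁾,zB⁽¹⁾],[zC⁽²⁾, zD⁽²⁾, 0, 0]].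 If the transfer functions θ_{α⁽¹⁾}, θ_{α⁽²⁾} are holomorphic on a neighborhood Γ of 0, then the transfer function of α satisfies θ_α(z) = θ_{α⁽²⁾}(z) θ_{α⁽¹⁾}(z) for all z ∈ Γ. -/
noncomputable section

open scoped ComplexConjugate

variable {N : ℕ}

section cascade

variable {N : ℕ} {X1 V X2 U Y : Type*}
  [NormedAddCommGroup X1] [NormedAddCommGroup V] [NormedAddCommGroup X2]
  [NormedAddCommGroup U] [NormedAddCommGroup Y]
  [NormedSpace ℂ X1] [NormedSpace ℂ V] [NormedSpace ℂ X2]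
  [NormedSpace ℂ U] [NormedSpace ℂ Y]

/-- the main operators `A_k` of the cascade connection `α⁽²⁾α⁽¹⁾`, acting on
`X⁽²⁾ ⊕ V ⊕ X⁽¹⁾` by the block matrix `[[A⁽²⁾, B⁽²⁾, 0],[0,0,C⁽¹⁾],[0,0,A⁽¹⁾]]` -/
def cascA (A1 : Fin N → (X1 →L[ℂ] X1)) (C1 : Fin N → (X1 →L[ℂ] V))
    (A2 : Fin N → (X2 →L[ℂ] X2)) (B2 : Fin N → (V →L[ℂ] X2)) :
    Fin N → (hS X2 (hS V X1) →L[ℂ] hS X2 (hS V X1)) := fun k =>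
  block2 (A2 k) ((B2 k).comp (fstL V X1)) 0 (block2 0 (C1 k) 0 (A1 k))

/-- the input operators `B_k = col(0, D⁽¹⁾, B⁽¹⁾)` of the cascade connection -/
def cascB (B1 : Fin N → (U →L[ℂ] X1)) (D1 : Fin N → (U →L[ℂ] V)) :
    Fin N → (U →L[ℂ] hS X2 (hS V X1)) := fun k =>
  (inrL X2 (hS V X1)).comp ((inlL V X1).comp (D1 k) + (inrL V X1).comp (B1 k))

/-- the output operators `C_k = [C⁽²⁾, D⁽²⁾, 0]` of the cascade connection -/
def cascC (C2 : Fin N → (X2 →L[ℂ] Y)) (D2 : Fin N → (V →L[ℂ] Y)) :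
    Fin N → (hS X2 (hS V X1) →L[ℂ] Y) := fun k =>
  (C2 k).comp (fstL X2 (hS V X1)) + (D2 k).comp ((fstL V X1).comp (sndL X2 (hS V X1)))

/-- the external operators `D_k = 0` of the cascade connection -/
def cascD : Fin N → (U →L[ℂ] Y) := fun _ => 0

end cascade

section cc

variable {N : ℕ} {X U Y : Type*}
  [NormedAddCommGroup X] [InnerProductSpace ℂ X] [CompleteSpace X]
  [NormedAddCommGroup U] [InnerProductSpace ℂ U] [CompleteSpace U]
  [NormedAddCommGroup Y] [InnerProductSpace ℂ Y] [CompleteSpace Y]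

/-- the monomial `p(A, A*)` associated with a word `w` in the `2N` noncommuting letters
`A_1, …, A_N, A_1^*, …, A_N^*` -/
def wordOp (A : Fin N → (X →L[ℂ] X)) (w : List (Fin N × Bool)) : X →L[ℂ] X :=
  (w.map (fun p => if p.2 then A p.1 else ContinuousLinearMap.adjoint (A p.1))).prod

/-- the generating set `⋃ p(A,A*)(B_k U + C_j* Y)` of the closely connected subspace -/
def ccSet (A : Fin N → (X →L[ℂ] X)) (B : Fin N → (U →L[ℂ] X)) (C : Fin N → (X →L[ℂ] Y)) :
    Set X :=
  {x | ∃ (w : List (Fin N × Bool)) (k : Fin N) (u : U), x = wordOp A w (B k u)} ∪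
    {x | ∃ (w : List (Fin N × Bool)) (j : Fin N) (y : Y),
      x = wordOp A w ((ContinuousLinearMap.adjoint (C j)) y)}

/-- the closely connected subspace `X_cc`: the smallest closed subspace containing all
`B_k U`, `C_j^* Y` and reducing every `A_k` -/
def ccSpace (A : Fin N → (X →L[ℂ] X)) (B : Fin N → (U →L[ℂ] X)) (C : Fin N → (X →L[ℂ] Y)) :
    Submodule ℂ X :=
  (Submodule.span ℂ (ccSet A B C)).topologicalClosure

/-- a system is closely connected if `X_cc = X` -/
def CloselyConnected (A : Fin N → (X →L[ℂ] X)) (B : Fin N → (U →L[ℂ] X))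
    (C : Fin N → (X →L[ℂ] Y)) : Prop :=
  ccSpace A B C = ⊤

end cc

section cascHelpers

variable {E F E' F' : Type*} [NormedAddCommGroup E] [NormedAddCommGroup F]
  [NormedSpace ℂ E] [NormedSpace ℂ F]
  [NormedAddCommGroup E'] [NormedAddCommGroup F'] [NormedSpace ℂ E'] [NormedSpace ℂ F']

lemma casc_ext {x y : hS E F} (h1 : x.fst = y.fst) (h2 : x.snd = y.snd) : x = y := by
  cases x with | toLp a => cases y with | toLp b => exact congrArg (WithLp.toLp 2) (Prod.ext h1 h2)

@[simp] lemma casc_sum_fst {ι : Type*} (s : Finset ι) (f : ι → hS E F) :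
    (∑ i ∈ s, f i).fst = ∑ i ∈ s, (f i).fst :=
  map_sum (WithLp.fstL 2 ℂ E F) f s

@[simp] lemma casc_sum_snd {ι : Type*} (s : Finset ι) (f : ι → hS E F) :
    (∑ i ∈ s, f i).snd = ∑ i ∈ s, (f i).snd :=
  map_sum (WithLp.sndL 2 ℂ E F) f s

@[simp] lemma casc_fstL_apply (x : hS E F) : fstL E F x = x.fst := rfl
@[simp] lemma casc_sndL_apply (x : hS E F) : sndL E F x = x.snd := rfl
@[simp] lemma casc_inlL_apply (e : E) : inlL E F e = WithLp.toLp 2 (e, 0) := rfl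
@[simp] lemma casc_inrL_apply (f : F) : inrL E F f = WithLp.toLp 2 (0, f) := rfl

@[simp] lemma casc_block2_apply (A : E →L[ℂ] E') (B : F →L[ℂ] E') (C : E →L[ℂ] F')
    (D : F →L[ℂ] F') (x : hS E F) :
    block2 A B C D x = WithLp.toLp 2 (A x.fst + B x.snd, C x.fst + D x.snd) := by
  apply casc_ext <;> simp [block2]

lemma casc_pencil_apply {N : ℕ} (T : Fin N → (E →L[ℂ] E')) (z : Fin N → ℂ) (x : E) :
    pencil T z x = ∑ k, z k • T k x := by simp [pencil]

end cascHelpers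

section cascPencils

variable {N : ℕ} {X1 V X2 U Y : Type*}
  [NormedAddCommGroup X1] [NormedAddCommGroup V] [NormedAddCommGroup X2]
  [NormedAddCommGroup U] [NormedAddCommGroup Y]
  [NormedSpace ℂ X1] [NormedSpace ℂ V] [NormedSpace ℂ X2]
  [NormedSpace ℂ U] [NormedSpace ℂ Y]
  (A1 : Fin N → (X1 →L[ℂ] X1)) (B1 : Fin N → (U →L[ℂ] X1))
  (C1 : Fin N → (X1 →L[ℂ] V)) (D1 : Fin N → (U →L[ℂ] V))
  (A2 : Fin N → (X2 →L[ℂ] X2)) (B2 : Fin N → (V →L[ℂ] X2))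
  (C2 : Fin N → (X2 →L[ℂ] Y)) (D2 : Fin N → (V →L[ℂ] Y))
  (z : Fin N → ℂ)

lemma casc_cascA_pencil_apply (x : hS X2 (hS V X1)) :
    pencil (cascA A1 C1 A2 B2) z x =
      WithLp.toLp 2 (pencil A2 z x.fst + pencil B2 z x.snd.fst, WithLp.toLp 2 (pencil C1 z x.snd.snd, pencil A1 z x.snd.snd)) := by
  have h : ∀ k, cascA A1 C1 A2 B2 k x =
      WithLp.toLp 2 (A2 k x.fst + B2 k x.snd.fst, WithLp.toLp 2 (C1 k x.snd.snd, A1 k x.snd.snd)) := by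
    intro k; simp [cascA]
  refine casc_ext ?_ (casc_ext ?_ ?_)
  · show fstL X2 (hS V X1) (pencil (cascA A1 C1 A2 B2) z x) = _
    simp [casc_pencil_apply, h, Finset.sum_add_distrib, smul_add]
  · show fstL V X1 (sndL X2 (hS V X1) (pencil (cascA A1 C1 A2 B2) z x)) = _
    simp [casc_pencil_apply, h]
  · show sndL V X1 (sndL X2 (hS V X1) (pencil (cascA A1 C1 A2 B2) z x)) = _
    simp [casc_pencil_apply, h]

lemma casc_cascB_pencil_apply (u : U) :
    pencil (cascB (X2 := X2) B1 D1) z u = WithLp.toLp 2 (0, WithLp.toLp 2 (pencil D1 z u, pencil B1 z u)) := by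
  have h : ∀ k, cascB (X2 := X2) B1 D1 k u = WithLp.toLp 2 (0, WithLp.toLp 2 (D1 k u, B1 k u)) := by
    intro k
    show inrL X2 (hS V X1) ((inlL V X1 (D1 k u)) + (inrL V X1 (B1 k u))) = _
    simp
    refine casc_ext ?_ ?_
    · show D1 k u + 0 = _; simp
    · show 0 + B1 k u = _; simp
  refine casc_ext ?_ (casc_ext ?_ ?_)
  · show fstL X2 (hS V X1) (pencil (cascB B1 D1) z u) = _
    simp [casc_pencil_apply, h]
  · show fstL V X1 (sndL X2 (hS V X1) (pencil (cascB B1 D1) z u)) = _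
    simp [casc_pencil_apply, h]
  · show sndL V X1 (sndL X2 (hS V X1) (pencil (cascB B1 D1) z u)) = _
    simp [casc_pencil_apply, h]

lemma casc_cascC_pencil_apply (x : hS X2 (hS V X1)) :
    pencil (cascC C2 D2) z x = pencil C2 z x.fst + pencil D2 z x.snd.fst := by
  have h : ∀ k, cascC (X1 := X1) C2 D2 k x = C2 k x.fst + D2 k x.snd.fst := by
    intro k; simp [cascC]
  simp [casc_pencil_apply, h, Finset.sum_add_distrib, smul_add]

end cascPencils
/-- formula `eq:factor-tf`: the transfer function of the cascade connection
`α = α⁽²⁾α⁽¹⁾` is the product `θ_α = θ_{α⁽²⁾} θ_{α⁽¹⁾}` on any neighbourhood `Γ` of `0` on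
which both transfer functions are holomorphic. -/
theorem cascade_transfer_function_multiplies {N : ℕ} {X1 V X2 U Y : Type}
    [NormedAddCommGroup X1] [InnerProductSpace ℂ X1] [CompleteSpace X1]
    [TopologicalSpace.SeparableSpace X1]
    [NormedAddCommGroup V] [InnerProductSpace ℂ V] [CompleteSpace V]
    [TopologicalSpace.SeparableSpace V]
    [NormedAddCommGroup X2] [InnerProductSpace ℂ X2] [CompleteSpace X2]
    [TopologicalSpace.SeparableSpace X2]
    [NormedAddCommGroup U] [InnerProductSpace ℂ U] [CompleteSpace U]
    [TopologicalSpace.SeparableSpace U]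
    [NormedAddCommGroup Y] [InnerProductSpace ℂ Y] [CompleteSpace Y]
    [TopologicalSpace.SeparableSpace Y]
    (A1 : Fin N → (X1 →L[ℂ] X1)) (B1 : Fin N → (U →L[ℂ] X1))
    (C1 : Fin N → (X1 →L[ℂ] V)) (D1 : Fin N → (U →L[ℂ] V))
    (A2 : Fin N → (X2 →L[ℂ] X2)) (B2 : Fin N → (V →L[ℂ] X2))
    (C2 : Fin N → (X2 →L[ℂ] Y)) (D2 : Fin N → (V →L[ℂ] Y))
    (Γ : Set (Fin N → ℂ)) (hΓ : Γ ∈ nhds 0)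
    (hhol : ∀ z ∈ Γ, IsUnit (1 - pencil A1 z) ∧ IsUnit (1 - pencil A2 z)) :
    ∀ z ∈ Γ, IsUnit (1 - pencil (cascA A1 C1 A2 B2) z) ∧
      transfer (cascA A1 C1 A2 B2) (cascB B1 D1) (cascC C2 D2) cascD z =
        (transfer A2 B2 C2 D2 z).comp (transfer A1 B1 C1 D1 z) := by
  intro z hz
  obtain ⟨h1, h2⟩ := hhol z hz
  set e1 := Ring.inverse (1 - pencil A1 z) with he1
  set e2 := Ring.inverse (1 - pencil A2 z) with he2
  have h1r : ∀ y, e1 y - pencil A1 z (e1 y) = y := by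
    intro y
    have h := Ring.mul_inverse_cancel _ h1
    calc e1 y - pencil A1 z (e1 y) = ((1 - pencil A1 z) * e1) y := rfl
      _ = (1 : X1 →L[ℂ] X1) y := by rw [h]
      _ = y := rfl
  have h1l : ∀ y, e1 (y - pencil A1 z y) = y := by
    intro y
    have h := Ring.inverse_mul_cancel _ h1
    calc e1 (y - pencil A1 z y) = (e1 * (1 - pencil A1 z)) y := rfl
      _ = (1 : X1 →L[ℂ] X1) y := by rw [h]
      _ = y := rfl
  have h2r : ∀ y, e2 y - pencil A2 z (e2 y) = y := by
    intro y
    have h := Ring.mul_inverse_cancel _ h2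
    calc e2 y - pencil A2 z (e2 y) = ((1 - pencil A2 z) * e2) y := rfl
      _ = (1 : X2 →L[ℂ] X2) y := by rw [h]
      _ = y := rfl
  have h2l : ∀ y, e2 (y - pencil A2 z y) = y := by
    intro y
    have h := Ring.inverse_mul_cancel _ h2
    calc e2 (y - pencil A2 z y) = (e2 * (1 - pencil A2 z)) y := rfl
      _ = (1 : X2 →L[ℂ] X2) y := by rw [h]
      _ = y := rfl
  set T := 1 - pencil (cascA A1 C1 A2 B2) z with hT
  set E : hS X2 (hS V X1) →L[ℂ] hS X2 (hS V X1) :=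
    block2 e2
      ((e2.comp (pencil B2 z)).comp (fstL V X1 + ((pencil C1 z).comp e1).comp (sndL V X1)))
      0 (block2 1 ((pencil C1 z).comp e1) 0 e1) with hE
  have hTx : ∀ x : hS X2 (hS V X1),
      T x = WithLp.toLp 2 (x.fst - (pencil A2 z x.fst + pencil B2 z x.snd.fst),
        WithLp.toLp 2 (x.snd.fst - pencil C1 z x.snd.snd, x.snd.snd - pencil A1 z x.snd.snd)) := by
    intro x
    have : T x = x - pencil (cascA A1 C1 A2 B2) z x := rfl
    rw [this, casc_cascA_pencil_apply]
    rfl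
  have hEx : ∀ x : hS X2 (hS V X1),
      E x = WithLp.toLp 2 (e2 x.fst + e2 (pencil B2 z (x.snd.fst + pencil C1 z (e1 x.snd.snd))),
        WithLp.toLp 2 (x.snd.fst + pencil C1 z (e1 x.snd.snd), e1 x.snd.snd)) := by
    intro x
    rw [hE]
    refine casc_ext ?_ (casc_ext ?_ ?_)
    · simp
    · simp
    · simp
  have hTE : T * E = 1 := by
    ext x
    rw [ContinuousLinearMap.mul_apply, ContinuousLinearMap.one_apply, hEx, hTx]
    refine casc_ext ?_ (casc_ext ?_ ?_)
    · show e2 x.fst + e2 (pencil B2 z (x.snd.fst + pencil C1 z (e1 x.snd.snd))) -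
        (pencil A2 z (e2 x.fst + e2 (pencil B2 z (x.snd.fst + pencil C1 z (e1 x.snd.snd)))) +
          pencil B2 z (x.snd.fst + pencil C1 z (e1 x.snd.snd))) = x.fst
      set p := x.snd.fst + pencil C1 z (e1 x.snd.snd) with hp
      have A := h2r x.fst
      have B := h2r (pencil B2 z p)
      rw [map_add (pencil A2 z) (e2 x.fst) (e2 (pencil B2 z p))]
      have : e2 x.fst + e2 (pencil B2 z p) -
          (pencil A2 z (e2 x.fst) + pencil A2 z (e2 (pencil B2 z p)) + pencil B2 z p) =
          (e2 x.fst - pencil A2 z (e2 x.fst)) +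
            (e2 (pencil B2 z p) - pencil A2 z (e2 (pencil B2 z p))) - pencil B2 z p := by
        abel
      rw [this, A, B]; abel
    · show x.snd.fst + pencil C1 z (e1 x.snd.snd) - pencil C1 z (e1 x.snd.snd) = x.snd.fst
      abel
    · exact h1r x.snd.snd
  have hET : E * T = 1 := by
    ext x
    rw [ContinuousLinearMap.mul_apply, ContinuousLinearMap.one_apply, hTx, hEx]
    refine casc_ext ?_ (casc_ext ?_ ?_)
    · show e2 (x.fst - (pencil A2 z x.fst + pencil B2 z x.snd.fst)) +
        e2 (pencil B2 z ((x.snd.fst - pencil C1 z x.snd.snd) +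
          pencil C1 z (e1 (x.snd.snd - pencil A1 z x.snd.snd)))) = x.fst
      rw [h1l x.snd.snd]
      have : (x.snd.fst - pencil C1 z x.snd.snd) + pencil C1 z x.snd.snd = x.snd.fst := by abel
      rw [this, ← map_add]
      have : x.fst - (pencil A2 z x.fst + pencil B2 z x.snd.fst) + pencil B2 z x.snd.fst =
          x.fst - pencil A2 z x.fst := by abel
      rw [this, h2l x.fst]
    · show (x.snd.fst - pencil C1 z x.snd.snd) +
        pencil C1 z (e1 (x.snd.snd - pencil A1 z x.snd.snd)) = x.snd.fst
      rw [h1l x.snd.snd]; abel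
    · show e1 (x.snd.snd - pencil A1 z x.snd.snd) = x.snd.snd
      exact h1l x.snd.snd
  have hU : IsUnit T := ⟨⟨T, E, hTE, hET⟩, rfl⟩
  refine ⟨hU, ?_⟩
  have hinv : Ring.inverse T = E := by
    have h' : T = ((⟨T, E, hTE, hET⟩ : Units (hS X2 (hS V X1) →L[ℂ] hS X2 (hS V X1))) :
        hS X2 (hS V X1) →L[ℂ] hS X2 (hS V X1)) := rfl
    rw [h', Ring.inverse_unit]
    rfl
  have hD : pencil (cascD : Fin N → (U →L[ℂ] Y)) z = 0 := by
    ext u; simp [casc_pencil_apply, cascD]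
  ext u
  rw [transfer, ← hT, hinv, hD, zero_add]
  rw [ContinuousLinearMap.comp_apply, ContinuousLinearMap.comp_apply,
    casc_cascB_pencil_apply, hEx, casc_cascC_pencil_apply]
  rw [transfer, transfer]
  simp only [ContinuousLinearMap.comp_apply, ContinuousLinearMap.add_apply, map_add, map_zero,
    WithLp.toLp_fst, WithLp.toLp_snd]
  abel
end
end

section
/- If the cascade connection α = α⁽²⁾α⁽¹⁾ of two N-parametric systems is closely connected, then both α⁽¹⁾ and α⁽²⁾ are closely connected. -/
noncomputable section

open scoped ComplexConjugate

variable {N : ℕ}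

section proofAux
set_option linter.unusedSectionVars false

open ContinuousLinearMap

variable {N : ℕ}

lemma wordOp_nil {X : Type*} [NormedAddCommGroup X] [InnerProductSpace ℂ X] [CompleteSpace X]
    (A : Fin N → (X →L[ℂ] X)) (v : X) : wordOp A [] v = v := by
  simp [wordOp]

lemma wordOp_cons {X : Type*} [NormedAddCommGroup X] [InnerProductSpace ℂ X] [CompleteSpace X]
    (A : Fin N → (X →L[ℂ] X)) (p : Fin N × Bool) (w : List (Fin N × Bool)) (v : X) :
    wordOp A (p :: w) v
      = (if p.2 then A p.1 else ContinuousLinearMap.adjoint (A p.1)) (wordOp A w v) := by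
  rw [wordOp, wordOp, List.map_cons, List.prod_cons, ContinuousLinearMap.mul_apply]

section gensys
variable {X U Y : Type*}
  [NormedAddCommGroup X] [InnerProductSpace ℂ X] [CompleteSpace X]
  [NormedAddCommGroup U] [InnerProductSpace ℂ U] [CompleteSpace U]
  [NormedAddCommGroup Y] [InnerProductSpace ℂ Y] [CompleteSpace Y]
  {A : Fin N → (X →L[ℂ] X)} {B : Fin N → (U →L[ℂ] X)} {C : Fin N → (X →L[ℂ] Y)}

/-- orthogonality to the generating set -/
def POrth (A : Fin N → (X →L[ℂ] X)) (B : Fin N → (U →L[ℂ] X)) (C : Fin N → (X →L[ℂ] Y))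
    (x : X) : Prop := ∀ s ∈ ccSet A B C, inner (𝕜 := ℂ) s x = 0

lemma POrth.inner_B (hx : POrth A B C x) (k : Fin N) (u : U) :
    inner (𝕜 := ℂ) (B k u) x = 0 := by
  have := hx (wordOp A [] (B k u)) (Or.inl ⟨[], k, u, rfl⟩)
  simpa [wordOp_nil] using this

lemma POrth.C_eq_zero (hx : POrth A B C x) (j : Fin N) : C j x = 0 := by
  have h := hx (wordOp A [] ((ContinuousLinearMap.adjoint (C j)) (C j x)))
    (Or.inr ⟨[], j, C j x, rfl⟩)
  rw [wordOp_nil, ContinuousLinearMap.adjoint_inner_left] at h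
  exact inner_self_eq_zero.mp h

lemma POrth.apply_A (hx : POrth A B C x) (k : Fin N) : POrth A B C (A k x) := by
  rintro s hs
  rw [← ContinuousLinearMap.adjoint_inner_left]
  rcases hs with ⟨w, k', u, rfl⟩ | ⟨w, j, y, rfl⟩
  · have : ContinuousLinearMap.adjoint (A k) (wordOp A w (B k' u))
        = wordOp A ((k, false) :: w) (B k' u) := by simp [wordOp_cons]
    rw [this]; exact hx _ (Or.inl ⟨(k, false) :: w, k', u, rfl⟩)
  · have : ContinuousLinearMap.adjoint (A k) (wordOp A w ((ContinuousLinearMap.adjoint (C j)) y))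
        = wordOp A ((k, false) :: w) ((ContinuousLinearMap.adjoint (C j)) y) := by
      simp [wordOp_cons]
    rw [this]; exact hx _ (Or.inr ⟨(k, false) :: w, j, y, rfl⟩)

lemma POrth.apply_adjA (hx : POrth A B C x) (k : Fin N) :
    POrth A B C (ContinuousLinearMap.adjoint (A k) x) := by
  rintro s hs
  rw [ContinuousLinearMap.adjoint_inner_right]
  rcases hs with ⟨w, k', u, rfl⟩ | ⟨w, j, y, rfl⟩
  · have : A k (wordOp A w (B k' u)) = wordOp A ((k, true) :: w) (B k' u) := by
      simp [wordOp_cons]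
    rw [this]; exact hx _ (Or.inl ⟨(k, true) :: w, k', u, rfl⟩)
  · have : A k (wordOp A w ((ContinuousLinearMap.adjoint (C j)) y))
        = wordOp A ((k, true) :: w) ((ContinuousLinearMap.adjoint (C j)) y) := by
      simp [wordOp_cons]
    rw [this]; exact hx _ (Or.inr ⟨(k, true) :: w, j, y, rfl⟩)

lemma mem_orthogonal_ccSpace_of {x : X} (h : POrth A B C x) : x ∈ (ccSpace A B C)ᗮ := by
  rw [Submodule.mem_orthogonal]
  intro u hu
  have hle : (Submodule.span ℂ (ccSet A B C)).topologicalClosure ≤ (Submodule.span ℂ {x})ᗮ := by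
    refine Submodule.topologicalClosure_minimal _ ?_ (Submodule.isClosed_orthogonal _)
    rw [Submodule.span_le]
    intro s hs
    exact Submodule.mem_orthogonal_singleton_iff_inner_left.mpr (h s hs)
  have := hle hu
  exact Submodule.mem_orthogonal_singleton_iff_inner_left.mp this

lemma POrth_of_mem_orthogonal {x : X} (h : x ∈ (ccSpace A B C)ᗮ) : POrth A B C x := by
  intro s hs
  exact (Submodule.mem_orthogonal _ _).mp h s
    (Submodule.le_topologicalClosure _ (Submodule.subset_span hs))

end gensys
end proofAux

section cascAux
set_option linter.unusedSectionVars false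

variable {N : ℕ} {X1 V X2 U Y : Type}
  [NormedAddCommGroup X1] [InnerProductSpace ℂ X1] [CompleteSpace X1]
  [NormedAddCommGroup V] [InnerProductSpace ℂ V] [CompleteSpace V]
  [NormedAddCommGroup X2] [InnerProductSpace ℂ X2] [CompleteSpace X2]
  [NormedAddCommGroup U] [InnerProductSpace ℂ U] [CompleteSpace U]
  [NormedAddCommGroup Y] [InnerProductSpace ℂ Y] [CompleteSpace Y]
  (A1 : Fin N → (X1 →L[ℂ] X1)) (B1 : Fin N → (U →L[ℂ] X1))
  (C1 : Fin N → (X1 →L[ℂ] V)) (D1 : Fin N → (U →L[ℂ] V))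
  (A2 : Fin N → (X2 →L[ℂ] X2)) (B2 : Fin N → (V →L[ℂ] X2))
  (C2 : Fin N → (X2 →L[ℂ] Y)) (D2 : Fin N → (V →L[ℂ] Y))

/-- embedding of `X1` into the cascade state space -/
def emb1 : X1 →L[ℂ] hS X2 (hS V X1) := (inrL X2 (hS V X1)).comp (inrL V X1)

/-- embedding of `X2` into the cascade state space -/
def emb2 : X2 →L[ℂ] hS X2 (hS V X1) := inlL X2 (hS V X1)

lemma emb1_inner (x : X1) (v : hS X2 (hS V X1)) :
    inner (𝕜 := ℂ) v (emb1 (X2 := X2) (V := V) x) = inner (𝕜 := ℂ) v.snd.snd x := by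
  simp [emb1, inrL]

lemma emb2_inner (x : X2) (v : hS X2 (hS V X1)) :
    inner (𝕜 := ℂ) v (emb2 (X1 := X1) (V := V) x) = inner (𝕜 := ℂ) v.fst x := by
  simp [emb2, inlL]

lemma cascA_inner_emb1 (k : Fin N) (x : X1) (v : hS X2 (hS V X1)) :
    inner (𝕜 := ℂ) (cascA A1 C1 A2 B2 k v) (emb1 (X2 := X2) (V := V) x)
      = inner (𝕜 := ℂ) (A1 k v.snd.snd) x := by
  simp [cascA, block2, emb1, inlL, inrL, fstL, sndL]

lemma cascA_inner_emb2 (k : Fin N) (x : X2) (v : hS X2 (hS V X1)) :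
    inner (𝕜 := ℂ) (cascA A1 C1 A2 B2 k v) (emb2 (X1 := X1) (V := V) x)
      = inner (𝕜 := ℂ) (A2 k v.fst) x + inner (𝕜 := ℂ) (B2 k v.snd.fst) x := by
  simp [cascA, block2, emb2, inlL, inrL, fstL, sndL, inner_add_left]

lemma adj_cascA_emb1 (k : Fin N) (x : X1) :
    ContinuousLinearMap.adjoint (cascA A1 C1 A2 B2 k) (emb1 (X2 := X2) (V := V) x)
      = emb1 (X2 := X2) (V := V) (ContinuousLinearMap.adjoint (A1 k) x) := by
  apply ext_inner_left ℂ
  intro v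
  rw [ContinuousLinearMap.adjoint_inner_right, cascA_inner_emb1, emb1_inner,
    ContinuousLinearMap.adjoint_inner_right]

lemma adj_cascA_emb2 (k : Fin N) (x : X2)
    (hB : ContinuousLinearMap.adjoint (B2 k) x = 0) :
    ContinuousLinearMap.adjoint (cascA A1 C1 A2 B2 k) (emb2 (X1 := X1) (V := V) x)
      = emb2 (X1 := X1) (V := V) (ContinuousLinearMap.adjoint (A2 k) x) := by
  apply ext_inner_left ℂ
  intro v
  rw [ContinuousLinearMap.adjoint_inner_right, cascA_inner_emb2, emb2_inner,
    ContinuousLinearMap.adjoint_inner_right, ← ContinuousLinearMap.adjoint_inner_right (B2 k),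
    hB, inner_zero_right, add_zero]

lemma cascA_apply_emb1 (k : Fin N) (x : X1) (hC : C1 k x = 0) :
    cascA A1 C1 A2 B2 k (emb1 (X2 := X2) (V := V) x)
      = emb1 (X2 := X2) (V := V) (A1 k x) := by
  simp [cascA, block2, emb1, inlL, inrL, fstL, sndL, hC, ← WithLp.toLp_add, Prod.mk_add_mk]

lemma cascA_apply_emb2 (k : Fin N) (x : X2) :
    cascA A1 C1 A2 B2 k (emb2 (X1 := X1) (V := V) x)
      = emb2 (X1 := X1) (V := V) (A2 k x) := by
  simp [cascA, block2, emb2, inlL, inrL, fstL, sndL, ← WithLp.toLp_add, Prod.mk_add_mk]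

lemma cascB_inner_emb1 (k : Fin N) (u : U) (x : X1) :
    inner (𝕜 := ℂ) (cascB (X2 := X2) B1 D1 k u) (emb1 (X2 := X2) (V := V) x)
      = inner (𝕜 := ℂ) (B1 k u) x := by
  simp [cascB, emb1, inlL, inrL]

lemma cascB_inner_emb2 (k : Fin N) (u : U) (x : X2) :
    inner (𝕜 := ℂ) (cascB (X2 := X2) B1 D1 k u) (emb2 (X1 := X1) (V := V) x) = 0 := by
  simp [cascB, emb2, inlL, inrL]

lemma cascC_apply_emb1 (j : Fin N) (x : X1) :
    cascC C2 D2 j (emb1 (X2 := X2) (V := V) x) = 0 := by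
  simp [cascC, emb1, inlL, inrL, fstL, sndL]

lemma cascC_apply_emb2 (j : Fin N) (x : X2) :
    cascC C2 D2 j (emb2 (X1 := X1) (V := V) x) = C2 j x := by
  simp [cascC, emb2, inlL, inrL, fstL, sndL]

end cascAux

section keyLemmas
set_option linter.unusedSectionVars false

variable {N : ℕ} {X1 V X2 U Y : Type}
  [NormedAddCommGroup X1] [InnerProductSpace ℂ X1] [CompleteSpace X1]
  [NormedAddCommGroup V] [InnerProductSpace ℂ V] [CompleteSpace V]
  [NormedAddCommGroup X2] [InnerProductSpace ℂ X2] [CompleteSpace X2]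
  [NormedAddCommGroup U] [InnerProductSpace ℂ U] [CompleteSpace U]
  [NormedAddCommGroup Y] [InnerProductSpace ℂ Y] [CompleteSpace Y]
  (A1 : Fin N → (X1 →L[ℂ] X1)) (B1 : Fin N → (U →L[ℂ] X1))
  (C1 : Fin N → (X1 →L[ℂ] V)) (D1 : Fin N → (U →L[ℂ] V))
  (A2 : Fin N → (X2 →L[ℂ] X2)) (B2 : Fin N → (V →L[ℂ] X2))
  (C2 : Fin N → (X2 →L[ℂ] Y)) (D2 : Fin N → (V →L[ℂ] Y))

lemma POrth.adjB_eq_zero {X U Y : Type}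
    [NormedAddCommGroup X] [InnerProductSpace ℂ X] [CompleteSpace X]
    [NormedAddCommGroup U] [InnerProductSpace ℂ U] [CompleteSpace U]
    [NormedAddCommGroup Y'] [InnerProductSpace ℂ Y'] [CompleteSpace Y']
    {A : Fin N → (X →L[ℂ] X)} {B : Fin N → (U →L[ℂ] X)} {C : Fin N → (X →L[ℂ] Y')} {x : X}
    (hx : POrth A B C x) (k : Fin N) : ContinuousLinearMap.adjoint (B k) x = 0 := by
  apply ext_inner_left ℂ
  intro v
  rw [ContinuousLinearMap.adjoint_inner_right, inner_zero_right]
  exact hx.inner_B k v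

lemma key1 (w : List (Fin N × Bool)) (x : X1) (hx : POrth A1 B1 C1 x)
    (g : hS X2 (hS V X1))
    (hg : (∃ k u, g = cascB (X2 := X2) B1 D1 k u) ∨
      (∃ j y, g = ContinuousLinearMap.adjoint (cascC (X1 := X1) C2 D2 j) y)) :
    inner (𝕜 := ℂ) (wordOp (cascA A1 C1 A2 B2) w g) (emb1 (X2 := X2) (V := V) x) = 0 := by
  induction w generalizing x with
  | nil =>
    rcases hg with ⟨k, u, rfl⟩ | ⟨j, y, rfl⟩
    · rw [wordOp_nil, cascB_inner_emb1]
      exact hx.inner_B k u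
    · rw [wordOp_nil, ContinuousLinearMap.adjoint_inner_left, cascC_apply_emb1,
        inner_zero_right]
  | cons p w ih =>
    rw [wordOp_cons]
    by_cases hp : p.2 = true
    · rw [if_pos hp, ← ContinuousLinearMap.adjoint_inner_right, adj_cascA_emb1]
      exact ih _ (hx.apply_adjA p.1)
    · rw [if_neg hp, ContinuousLinearMap.adjoint_inner_left,
        cascA_apply_emb1 _ _ _ _ _ _ (hx.C_eq_zero p.1)]
      exact ih _ (hx.apply_A p.1)

lemma key2 (w : List (Fin N × Bool)) (x : X2) (hx : POrth A2 B2 C2 x)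
    (g : hS X2 (hS V X1))
    (hg : (∃ k u, g = cascB (X2 := X2) B1 D1 k u) ∨
      (∃ j y, g = ContinuousLinearMap.adjoint (cascC (X1 := X1) C2 D2 j) y)) :
    inner (𝕜 := ℂ) (wordOp (cascA A1 C1 A2 B2) w g) (emb2 (X1 := X1) (V := V) x) = 0 := by
  induction w generalizing x with
  | nil =>
    rcases hg with ⟨k, u, rfl⟩ | ⟨j, y, rfl⟩
    · rw [wordOp_nil, cascB_inner_emb2]
    · rw [wordOp_nil, ContinuousLinearMap.adjoint_inner_left, cascC_apply_emb2,
        hx.C_eq_zero j, inner_zero_right]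
  | cons p w ih =>
    rw [wordOp_cons]
    by_cases hp : p.2 = true
    · rw [if_pos hp,
        ← ContinuousLinearMap.adjoint_inner_right (cascA A1 C1 A2 B2 p.1),
        adj_cascA_emb2 A1 C1 A2 B2 p.1 x (POrth.adjB_eq_zero (Y := Y) hx p.1)]
      exact ih _ (hx.apply_adjA p.1)
    · rw [if_neg hp, ContinuousLinearMap.adjoint_inner_left, cascA_apply_emb2]
      exact ih _ (hx.apply_A p.1)

end keyLemmas

/-- Theorem `thm:clos-con`: if a cascade connection `α = α⁽²⁾α⁽¹⁾` is closely
connected, then both factors `α⁽¹⁾` and `α⁽²⁾` are closely connected. -/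
theorem cascade_closely_connected_implies_factors {N : ℕ} {X1 V X2 U Y : Type}
    [NormedAddCommGroup X1] [InnerProductSpace ℂ X1] [CompleteSpace X1]
    [TopologicalSpace.SeparableSpace X1]
    [NormedAddCommGroup V] [InnerProductSpace ℂ V] [CompleteSpace V]
    [TopologicalSpace.SeparableSpace V]
    [NormedAddCommGroup X2] [InnerProductSpace ℂ X2] [CompleteSpace X2]
    [TopologicalSpace.SeparableSpace X2]
    [NormedAddCommGroup U] [InnerProductSpace ℂ U] [CompleteSpace U]
    [TopologicalSpace.SeparableSpace U]
    [NormedAddCommGroup Y] [InnerProductSpace ℂ Y] [CompleteSpace Y]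
    [TopologicalSpace.SeparableSpace Y]
    (A1 : Fin N → (X1 →L[ℂ] X1)) (B1 : Fin N → (U →L[ℂ] X1))
    (C1 : Fin N → (X1 →L[ℂ] V)) (D1 : Fin N → (U →L[ℂ] V))
    (A2 : Fin N → (X2 →L[ℂ] X2)) (B2 : Fin N → (V →L[ℂ] X2))
    (C2 : Fin N → (X2 →L[ℂ] Y)) (D2 : Fin N → (V →L[ℂ] Y))
    (hcc : CloselyConnected (cascA A1 C1 A2 B2) (cascB (X2 := X2) B1 D1) (cascC C2 D2)) :
    CloselyConnected A1 B1 C1 ∧ CloselyConnected A2 B2 C2 := by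
  have hcc' : ccSpace (cascA A1 C1 A2 B2) (cascB (X2 := X2) B1 D1) (cascC C2 D2) = ⊤ := hcc
  constructor
  · by_contra hne
    haveI : CompleteSpace (ccSpace A1 B1 C1) :=
      (Submodule.isClosed_topologicalClosure _).completeSpace_coe
    have hbot : (ccSpace A1 B1 C1)ᗮ ≠ ⊥ := fun h => hne (Submodule.orthogonal_eq_bot_iff.mp h)
    obtain ⟨x, hxmem, hx0⟩ := Submodule.exists_mem_ne_zero_of_ne_bot hbot
    have hP : POrth A1 B1 C1 x := POrth_of_mem_orthogonal hxmem
    have hemb : emb1 (X2 := X2) (V := V) x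
        ∈ (ccSpace (cascA A1 C1 A2 B2) (cascB (X2 := X2) B1 D1) (cascC C2 D2))ᗮ := by
      apply mem_orthogonal_ccSpace_of
      rintro s (⟨w, k, u, rfl⟩ | ⟨w, j, y, rfl⟩)
      · exact key1 A1 B1 C1 D1 A2 B2 C2 D2 w x hP _ (Or.inl ⟨k, u, rfl⟩)
      · exact key1 A1 B1 C1 D1 A2 B2 C2 D2 w x hP _ (Or.inr ⟨j, y, rfl⟩)
    rw [hcc', Submodule.top_orthogonal_eq_bot, Submodule.mem_bot] at hemb
    apply hx0
    have h2 := congrArg (fun v => sndL V X1 (sndL X2 (hS V X1) v)) hemb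
    simpa [emb1, inrL, sndL] using h2
  · by_contra hne
    haveI : CompleteSpace (ccSpace A2 B2 C2) :=
      (Submodule.isClosed_topologicalClosure _).completeSpace_coe
    have hbot : (ccSpace A2 B2 C2)ᗮ ≠ ⊥ := fun h => hne (Submodule.orthogonal_eq_bot_iff.mp h)
    obtain ⟨x, hxmem, hx0⟩ := Submodule.exists_mem_ne_zero_of_ne_bot hbot
    have hP : POrth A2 B2 C2 x := POrth_of_mem_orthogonal hxmem
    have hemb : emb2 (X1 := X1) (V := V) x
        ∈ (ccSpace (cascA A1 C1 A2 B2) (cascB (X2 := X2) B1 D1) (cascC C2 D2))ᗮ := by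
      apply mem_orthogonal_ccSpace_of
      rintro s (⟨w, k, u, rfl⟩ | ⟨w, j, y, rfl⟩)
      · exact key2 A1 B1 C1 D1 A2 B2 C2 D2 w x hP _ (Or.inl ⟨k, u, rfl⟩)
      · exact key2 A1 B1 C1 D1 A2 B2 C2 D2 w x hP _ (Or.inr ⟨j, y, rfl⟩)
    rw [hcc', Submodule.top_orthogonal_eq_bot, Submodule.mem_bot] at hemb
    apply hx0
    have h2 := congrArg (fun v => fstL X2 (hS V X1) v) hemb
    simpa [emb2, inlL, fstL] using h2
end
end

section
/- Let U be the bilateral shift on ℓ²(ℤ), decomposed over ℓ²(ℤ) = ℓ²₊ ⊕ ℓ²₋ where ℓ²₊ = ℓ²(ℤ≥0) and ℓ²₋ = ℓ²(ℤ<0), giving block decompositions U* = [[A⁽¹⁾, B⁽¹⁾],[C⁽¹⁾, D⁽¹⁾]] and U = [[A⁽²⁾, B⁽²⁾],[C⁽²⁾, D⁽²⁾]] relative to ℓ²₊ ⊕ ℓ²₋ → ℓ²₊ ⊕ ℓ²₋. Then the cascade operator A = [[A⁽²⁾, B⁽²⁾, 0],[0, 0, C⁽¹⁾],[0, 0, A⁽¹⁾]]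 on ℓ²₊ ⊕ ℓ²₋ ⊕ ℓ²₊ has a nontrivial closed invariant subspace X_K = ℓ²₊ ⊕ K ⊕ ℓ²₊ (where K := span of the indicator sequence at index −1 inside ℓ²₋) on which A restricts to a unitary operator. -/
noncomputable section

open scoped ComplexConjugate

variable {N : ℕ}

/-- `ℓ²₊ = ℓ²(ℤ_{≥0})` -/
abbrev l2P := lp (fun _ : ℕ => ℂ) 2

/-- `ℓ²₋ = ℓ²(ℤ_{<0})`, with coordinate `n` standing for the index `−1−n` -/
abbrev l2M := lp (fun _ : ℕ => ℂ) 2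

/-- the one-dimensional subspace `K ⊆ ℓ²₋` of sequences supported at the index `−1` -/
def Ksub : Submodule ℂ l2M where
  carrier := {c | ∀ n : ℕ, n ≠ 0 → (c : ∀ _ : ℕ, ℂ) n = 0}
  add_mem' := by
    intro a b ha hb n hn
    have : (↑(a + b) : ∀ _ : ℕ, ℂ) n = a n + b n := by simp [lp.coeFn_add]
    rw [this, ha n hn, hb n hn, add_zero]
  zero_mem' := by intro n hn; simp
  smul_mem' := by
    intro r c hc n hn
    have : (↑(r • c) : ∀ _ : ℕ, ℂ) n = r * c n := by simp [lp.coeFn_smul]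
    rw [this, hc n hn, mul_zero]

lemma l2_hasSum (f : lp (fun _ : ℕ => ℂ) 2) :
    HasSum (fun n => ‖(f : ∀ _ : ℕ, ℂ) n‖ ^ 2) (‖f‖ ^ 2) := by
  have h := lp.hasSum_norm (p := 2) (by norm_num) f
  simpa [Real.rpow_natCast, ENNReal.toReal_ofNat] using h

lemma l2_norm_sq (f : lp (fun _ : ℕ => ℂ) 2) :
    ‖f‖ ^ 2 = ∑' n, ‖(f : ∀ _ : ℕ, ℂ) n‖ ^ 2 := (l2_hasSum f).tsum_eq.symm

lemma l2_summable (f : lp (fun _ : ℕ => ℂ) 2) :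
    Summable (fun n => ‖(f : ∀ _ : ℕ, ℂ) n‖ ^ 2) := (l2_hasSum f).summable

lemma l2_eval_continuous (n : ℕ) : Continuous fun c : lp (fun _ : ℕ => ℂ) 2 =>
    (c : ∀ _ : ℕ, ℂ) n := by
  refine (LipschitzWith.mk_one fun f g => ?_).continuous
  have h1 : ((f - g : lp (fun _ : ℕ => ℂ) 2) : ∀ _ : ℕ, ℂ) n = f n - g n := by
    simp [lp.coeFn_sub]
  calc dist ((f : ∀ _ : ℕ, ℂ) n) ((g : ∀ _ : ℕ, ℂ) n) = ‖(f - g : lp (fun _ : ℕ => ℂ) 2) n‖ := by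
        rw [dist_eq_norm, h1]
    _ ≤ ‖f - g‖ := lp.norm_apply_le_norm two_ne_zero _ n
    _ = dist f g := (dist_eq_norm f g).symm

set_option maxHeartbeats 2000000 in
/-- the example of Section `sec:cascade`: the cascade operator
`A = [[A⁽²⁾, B⁽²⁾, 0],[0,0,C⁽¹⁾],[0,0,A⁽¹⁾]]` built from the block decompositions of the
bilateral shift (`A⁽¹⁾` backward shift, `A⁽²⁾` forward shift, `C⁽¹⁾ c = (…,0,0,c₀)`,
`B⁽²⁾ c = col(c₋₁,0,0,…)`) has a nontrivial closed invariant subspace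
`X_K = ℓ²₊ ⊕ K ⊕ ℓ²₊` on which it restricts to a unitary operator. -/
theorem cascade_shift_example_has_unitary_part
    (A1 : l2P →L[ℂ] l2P) (hA1 : ∀ (c : l2P) (n : ℕ), (A1 c : ∀ _ : ℕ, ℂ) n = c (n + 1))
    (A2 : l2P →L[ℂ] l2P)
    (hA2 : ∀ c : l2P, (A2 c : ∀ _ : ℕ, ℂ) 0 = 0 ∧ ∀ n, (A2 c : ∀ _ : ℕ, ℂ) (n + 1) = c n)
    (C1 : l2P →L[ℂ] l2M)
    (hC1 : ∀ c : l2P, (C1 c : ∀ _ : ℕ, ℂ) 0 = c 0 ∧ ∀ n, (C1 c : ∀ _ : ℕ, ℂ) (n + 1) = 0)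
    (B2 : l2M →L[ℂ] l2P)
    (hB2 : ∀ c : l2M, (B2 c : ∀ _ : ℕ, ℂ) 0 = c 0 ∧ ∀ n, (B2 c : ∀ _ : ℕ, ℂ) (n + 1) = 0) :
    let Acasc : hS l2P (hS l2M l2P) →L[ℂ] hS l2P (hS l2M l2P) :=
      block2 A2 (B2.comp (fstL l2M l2P)) 0 (block2 0 C1 0 A1)
    let XK : Submodule ℂ (hS l2P (hS l2M l2P)) :=
      Ksub.comap ((fstL l2M l2P).comp (sndL l2P (hS l2M l2P))).toLinearMap
    IsClosed (XK : Set (hS l2P (hS l2M l2P))) ∧ XK ≠ ⊥ ∧ XK ≠ ⊤ ∧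
      (∀ w ∈ XK, Acasc w ∈ XK) ∧ (∀ w ∈ XK, ‖Acasc w‖ = ‖w‖) ∧
      (∀ w ∈ XK, ∃ v ∈ XK, Acasc v = w) := by
  intro Acasc XK
  -- component formulas for Acasc
  have hfst : ∀ w : hS l2P (hS l2M l2P), (Acasc w).fst = A2 w.fst + B2 w.snd.fst := by
    intro w; show _ = _; simp [Acasc, block2, inlL, inrL, fstL, sndL]
  have hmid : ∀ w : hS l2P (hS l2M l2P), (Acasc w).snd.fst = C1 w.snd.snd := by
    intro w; show _ = _; simp [Acasc, block2, inlL, inrL, fstL, sndL]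
  have hlst : ∀ w : hS l2P (hS l2M l2P), (Acasc w).snd.snd = A1 w.snd.snd := by
    intro w; show _ = _; simp [Acasc, block2, inlL, inrL, fstL, sndL]
  have hmem : ∀ w : hS l2P (hS l2M l2P),
      w ∈ XK ↔ ∀ n : ℕ, n ≠ 0 → (w.snd.fst : ∀ _ : ℕ, ℂ) n = 0 := fun w => Iff.rfl
  have hSext : ∀ x y : hS l2P (hS l2M l2P),
      x.fst = y.fst → x.snd.fst = y.snd.fst → x.snd.snd = y.snd.snd → x = y := by
    intro x y h1 h2 h3
    exact (WithLp.ext_iff 2).2 (Prod.ext h1 ((WithLp.ext_iff 2).2 (Prod.ext h2 h3)))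
  refine ⟨?_, ?_, ?_, ?_, ?_, ?_⟩
  · -- closedness
    have : (XK : Set (hS l2P (hS l2M l2P))) =
        ⋂ (n : ℕ) (_ : n ≠ 0), {w : hS l2P (hS l2M l2P) | (w.snd.fst : ∀ _ : ℕ, ℂ) n = 0} := by
      ext w
      simp only [Set.mem_iInter, Set.mem_setOf_eq, SetLike.mem_coe]
      exact hmem w
    rw [this]
    refine isClosed_iInter fun n => isClosed_iInter fun _ => ?_
    have hcont : Continuous fun w : hS l2P (hS l2M l2P) => w.snd.fst :=
      ((fstL l2M l2P).comp (sndL l2P (hS l2M l2P))).continuous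
    exact isClosed_eq ((l2_eval_continuous n).comp hcont) continuous_const
  · -- ≠ ⊥
    intro h
    have hx : (inlL l2P (hS l2M l2P) (lp.single 2 0 (1 : ℂ))) ∈ XK := by
      rw [hmem]
      intro n hn
      show ((0 : l2M) : ∀ _ : ℕ, ℂ) n = 0
      simp
    rw [h, Submodule.mem_bot] at hx
    have h0 := congrArg (fun w : hS l2P (hS l2M l2P) => ((w.fst : l2P) : ∀ _ : ℕ, ℂ) 0) hx
    simp only at h0
    have h1 : ((lp.single 2 0 (1 : ℂ) : l2P) : ∀ _ : ℕ, ℂ) 0 = 1 := lp.single_apply_self 2 0 1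
    have h2 : (((0 : hS l2P (hS l2M l2P)).fst : l2P) : ∀ _ : ℕ, ℂ) 0 = 0 := by
      show ((0 : l2P) : ∀ _ : ℕ, ℂ) 0 = 0; simp
    rw [show ((inlL l2P (hS l2M l2P) (lp.single 2 0 (1 : ℂ))).fst : l2P) = lp.single 2 0 (1 : ℂ)
      from rfl] at h0
    rw [h1, h2] at h0
    exact one_ne_zero h0
  · -- ≠ ⊤
    intro h
    have hx : (inrL l2P (hS l2M l2P) (inlL l2M l2P (lp.single 2 1 (1 : ℂ)))) ∈ XK := by
      rw [h]; exact Submodule.mem_top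
    rw [hmem] at hx
    have := hx 1 one_ne_zero
    rw [show ((inrL l2P (hS l2M l2P) (inlL l2M l2P (lp.single 2 1 (1 : ℂ)))).snd.fst : l2M)
        = lp.single 2 1 (1 : ℂ) from rfl] at this
    rw [lp.single_apply_self (E := fun _ : ℕ => ℂ) 2 1 (1 : ℂ)] at this
    exact one_ne_zero this
  · -- invariance
    intro w _
    rw [hmem]
    intro n hn
    rw [hmid w]
    obtain ⟨m, rfl⟩ := Nat.exists_eq_succ_of_ne_zero hn
    exact (hC1 w.snd.snd).2 m
  · -- isometry on XK
    intro w hw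
    rw [hmem] at hw
    have key : ‖Acasc w‖ ^ 2 = ‖w‖ ^ 2 := by
      have e1 : ‖Acasc w‖ ^ 2 = ‖(Acasc w).fst‖ ^ 2 + (‖(Acasc w).snd.fst‖ ^ 2 + ‖(Acasc w).snd.snd‖ ^ 2) := by
        rw [WithLp.prod_norm_sq_eq_of_L2, WithLp.prod_norm_sq_eq_of_L2]
      have e2 : ‖w‖ ^ 2 = ‖w.fst‖ ^ 2 + (‖w.snd.fst‖ ^ 2 + ‖w.snd.snd‖ ^ 2) := by
        rw [WithLp.prod_norm_sq_eq_of_L2, WithLp.prod_norm_sq_eq_of_L2]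
      -- norms of the pieces
      have hf1 : ‖A2 w.fst + B2 w.snd.fst‖ ^ 2 = ‖(w.snd.fst : ∀ _ : ℕ, ℂ) 0‖ ^ 2 + ‖w.fst‖ ^ 2 := by
        rw [l2_norm_sq, Summable.tsum_eq_zero_add (l2_summable _)]
        have e0 : ((A2 w.fst + B2 w.snd.fst : l2P) : ∀ _ : ℕ, ℂ) 0 = (w.snd.fst : ∀ _ : ℕ, ℂ) 0 := by
          rw [lp.coeFn_add]
          simp [(hA2 w.fst).1, (hB2 w.snd.fst).1]
        have en : ∀ n, ((A2 w.fst + B2 w.snd.fst : l2P) : ∀ _ : ℕ, ℂ) (n + 1) = (w.fst : ∀ _ : ℕ, ℂ) n := by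
          intro n
          rw [lp.coeFn_add]
          simp [(hA2 w.fst).2 n, (hB2 w.snd.fst).2 n]
        rw [e0]
        congr 1
        rw [l2_norm_sq w.fst]
        exact tsum_congr fun n => by rw [en n]
      have hC : ‖C1 w.snd.snd‖ ^ 2 = ‖(w.snd.snd : ∀ _ : ℕ, ℂ) 0‖ ^ 2 := by
        rw [l2_norm_sq]
        rw [tsum_eq_single 0 (fun n hn => ?_), (hC1 w.snd.snd).1]
        obtain ⟨m, rfl⟩ := Nat.exists_eq_succ_of_ne_zero hn
        rw [(hC1 w.snd.snd).2 m]
        simp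
      have hA1n : ‖A1 w.snd.snd‖ ^ 2 = ∑' n, ‖(w.snd.snd : ∀ _ : ℕ, ℂ) (n + 1)‖ ^ 2 := by
        rw [l2_norm_sq]
        exact tsum_congr fun n => by rw [hA1 w.snd.snd n]
      have hcsplit : ‖w.snd.snd‖ ^ 2
          = ‖(w.snd.snd : ∀ _ : ℕ, ℂ) 0‖ ^ 2 + ∑' n, ‖(w.snd.snd : ∀ _ : ℕ, ℂ) (n + 1)‖ ^ 2 := by
        rw [l2_norm_sq]
        exact Summable.tsum_eq_zero_add (l2_summable _)
      have hb : ‖w.snd.fst‖ ^ 2 = ‖(w.snd.fst : ∀ _ : ℕ, ℂ) 0‖ ^ 2 := by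
        rw [l2_norm_sq]
        exact tsum_eq_single 0 fun n hn => by rw [hw n hn]; simp
      rw [e1, e2, hfst w, hmid w, hlst w, hf1, hC, hA1n, hcsplit, hb]
      ring
    calc ‖Acasc w‖ = Real.sqrt (‖Acasc w‖ ^ 2) := (Real.sqrt_sq (norm_nonneg _)).symm
      _ = Real.sqrt (‖w‖ ^ 2) := by rw [key]
      _ = ‖w‖ := Real.sqrt_sq (norm_nonneg _)
  · -- surjectivity onto XK
    intro w hw
    rw [hmem] at hw
    set a' : l2P := A1 w.fst with ha'
    set b' : l2M := lp.single 2 0 ((w.fst : ∀ _ : ℕ, ℂ) 0) with hb'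
    set c' : l2P := lp.single 2 0 ((w.snd.fst : ∀ _ : ℕ, ℂ) 0) + A2 w.snd.snd with hc'
    refine ⟨inlL l2P (hS l2M l2P) a'
        + inrL l2P (hS l2M l2P) (inlL l2M l2P b' + inrL l2M l2P c'), ?_, ?_⟩
    · rw [hmem]
      intro n hn
      show ((0 + (b' + 0) : l2M) : ∀ _ : ℕ, ℂ) n = 0
      rw [zero_add, add_zero, hb']
      exact lp.single_apply_ne 2 0 _ hn
    · set v : hS l2P (hS l2M l2P) := inlL l2P (hS l2M l2P) a'
        + inrL l2P (hS l2M l2P) (inlL l2M l2P b' + inrL l2M l2P c') with hv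
      have hv1 : v.fst = a' := by show a' + 0 = a'; rw [add_zero]
      have hv21 : v.snd.fst = b' := by show 0 + (b' + 0) = b'; rw [zero_add, add_zero]
      have hv22 : v.snd.snd = c' := by show 0 + (0 + c') = c'; rw [zero_add, zero_add]
      refine hSext _ _ ?_ ?_ ?_
      · rw [hfst v, hv1, hv21]
        refine lp.ext (funext fun n => ?_)
        rw [lp.coeFn_add]
        cases n with
        | zero =>
          rw [Pi.add_apply, (hA2 a').1, (hB2 b').1, zero_add, hb']
          exact lp.single_apply_self 2 0 _
        | succ m =>
          rw [Pi.add_apply, (hA2 a').2 m, (hB2 b').2 m, add_zero, ha']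
          exact hA1 w.fst m
      · rw [hmid v, hv22]
        refine lp.ext (funext fun n => ?_)
        cases n with
        | zero =>
          rw [(hC1 c').1, hc', lp.coeFn_add]
          simp only [Pi.add_apply, (hA2 w.snd.snd).1, add_zero]
          exact lp.single_apply_self 2 0 _
        | succ m =>
          rw [(hC1 c').2 m, hw (m + 1) (Nat.succ_ne_zero m)]
      · rw [hlst v, hv22]
        refine lp.ext (funext fun n => ?_)
        rw [hA1 c' n, hc', lp.coeFn_add]
        simp only [Pi.add_apply, (hA2 w.snd.snd).2 n]
        rw [lp.single_apply_ne 2 0 _ (Nat.succ_ne_zero n), zero_add]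
end
end

section
/- Let A : X → X, B : U → X, C : X → Y be bounded Hilbert-space operators and suppose the holomorphic function θ(z) = zC(I − zA)^{-1} zB (z ∈ ℂ^N a neighborhood of 0, zT := Σ z_k T_k) has a zero of multiplicity m ≥ 2 at 0. Then θ(z) = (zC)·θ̃(z) where θ̃(z) := (zA)^{m−2}(I − zA)^{-1} zB has a zero of multiplicity exactly m − 1 at 0. -/
noncomputable section

open scoped ComplexConjugate

variable {N : ℕ}

namespace ZCAux

open Filter Finset

variable {E : Type*} [NormedAddCommGroup E] [NormedSpace ℂ E]

/-- one-variable formal series with coefficients `c` -/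
def ovs (c : ℕ → E) : FormalMultilinearSeries ℂ ℂ E :=
  fun n => ContinuousMultilinearMap.mkPiRing ℂ (Fin n) (c n)

lemma ovs_apply (c : ℕ → E) (n : ℕ) (t : ℂ) :
    (ovs c n) (fun _ => t) = t ^ n • c n := by
  simp [ovs]

lemma hasFPS_ovs (c : ℕ → E) (a : NNReal) (K : ℝ)
    (hb : ∀ n, ‖c n‖ ≤ K * ((a : ℝ) + 1) ^ n)
    (f : ℂ → E) (hf : ∀ᶠ t in nhds (0:ℂ), HasSum (fun n => t ^ n • c n) (f t)) :
    HasFPowerSeriesAt f (ovs c) 0 := by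
  obtain ⟨ε, hε, hball⟩ := Metric.eventually_nhds_iff_ball.mp hf
  set δ : NNReal := min (a + 1)⁻¹ (Real.toNNReal (ε / 2)) with hδ
  have hδpos : 0 < δ := by
    apply lt_min
    · exact inv_pos.mpr (lt_of_lt_of_le one_pos le_add_self)
    · simp [Real.toNNReal_pos]; linarith
  have hδε : (δ : ℝ) < ε := by
    have h1 : (δ : ℝ) ≤ ε / 2 := by
      have := min_le_right (a + 1)⁻¹ (Real.toNNReal (ε / 2))
      calc (δ : ℝ) ≤ (Real.toNNReal (ε / 2) : ℝ) := NNReal.coe_le_coe.mpr this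
        _ = ε / 2 := Real.coe_toNNReal _ (by linarith)
    linarith
  refine ⟨δ, ?_, ENNReal.coe_pos.mpr hδpos, ?_⟩
  · -- radius bound
    refine le_trans ?_ ((ovs c).le_radius_of_bound K (r := (a+1)⁻¹) ?_)
    · exact_mod_cast ENNReal.coe_le_coe.mpr (min_le_left _ _)
    · intro n
      have h1 : ‖(ovs c) n‖ = ‖c n‖ := ContinuousMultilinearMap.norm_mkPiRing _
      rw [h1]
      have hco : (((a+1)⁻¹ : NNReal) : ℝ) = ((a:ℝ)+1)⁻¹ := by push_cast; ring
      rw [hco]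
      have hpos : (0:ℝ) < (a:ℝ) + 1 := by positivity
      calc ‖c n‖ * (((a:ℝ)+1)⁻¹) ^ n ≤ (K * ((a:ℝ)+1)^n) * (((a:ℝ)+1)⁻¹)^n := by
            apply mul_le_mul_of_nonneg_right (hb n); positivity
        _ = K := by rw [mul_assoc, ← mul_pow, mul_inv_cancel₀ hpos.ne', one_pow, mul_one]
  · intro y hy
    have hyε : ‖y‖ < ε := by
      rw [EMetric.mem_ball, edist_zero_right] at hy
      have : ‖y‖₊ < δ := by exact_mod_cast hy
      calc ‖y‖ = (‖y‖₊ : ℝ) := rfl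
        _ < (δ : ℝ) := by exact_mod_cast this
        _ < ε := hδε
    have h := hball y (by simpa [Metric.mem_ball, dist_zero_right] using hyε)
    simpa only [ovs_apply, zero_add] using h

lemma diag_coeff {N : ℕ} {F : (Fin N → ℂ) → E} {P : FormalMultilinearSeries ℂ (Fin N → ℂ) E}
    (hP : HasFPowerSeriesAt F P 0) (z : Fin N → ℂ) (c : ℕ → E) (a : NNReal) (K : ℝ)
    (hb : ∀ n, ‖c n‖ ≤ K * ((a : ℝ) + 1) ^ n)
    (hsum : ∀ᶠ t in nhds (0:ℂ), HasSum (fun n => t ^ n • c n) (F (t • z))) :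
    ∀ n, (P n) (fun _ => z) = c n := by
  have h2 : HasFPowerSeriesAt (fun t => F (t • z)) (ovs c) 0 := hasFPS_ovs c a K hb _ hsum
  have h1 : HasFPowerSeriesAt (fun t => F (t • z)) (ovs (fun n => P n (fun _ => z))) 0 := by
    obtain ⟨r0, hr0pos, hr0lt⟩ := ENNReal.lt_iff_exists_nnreal_btwn.mp hP.radius_pos
    have hr0pos' : (0:ℝ) < (r0 : ℝ) := by exact_mod_cast hr0pos
    obtain ⟨C, hC, hCb⟩ := P.norm_mul_pow_le_of_lt_radius hr0lt
    apply hasFPS_ovs _ (‖z‖₊ * r0⁻¹) C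
    · intro n
      have hle : ‖P n (fun _ => z)‖ ≤ ‖P n‖ * ‖z‖ ^ n := by
        calc ‖P n (fun _ => z)‖ ≤ ‖P n‖ * ∏ _i : Fin n, ‖z‖ :=
              (P n).le_opNorm _
          _ = ‖P n‖ * ‖z‖ ^ n := by rw [prod_const, card_univ, Fintype.card_fin]
      have h3 : ‖P n‖ * ‖z‖ ^ n ≤ C * (‖z‖ / (r0:ℝ)) ^ n := by
        have : ‖P n‖ * ‖z‖ ^ n = (‖P n‖ * (r0:ℝ)^n) * (‖z‖ / (r0:ℝ))^n := by
          rw [div_pow, mul_assoc, mul_div_assoc', mul_div_cancel_left₀ _ (pow_ne_zero _ hr0pos'.ne')]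
        rw [this]
        apply mul_le_mul_of_nonneg_right (hCb n); positivity
      have hcoe : ((‖z‖₊ * r0⁻¹ : NNReal) : ℝ) = ‖z‖ / (r0:ℝ) := by
        push_cast; rw [div_eq_mul_inv]
      refine le_trans hle (le_trans h3 ?_)
      rw [hcoe]
      apply mul_le_mul_of_nonneg_left _ (le_of_lt hC)
      apply pow_le_pow_left₀ (by positivity)
      linarith
    · obtain ⟨rB, hrB⟩ := hP
      have htend : Filter.Tendsto (fun t : ℂ => t • z) (nhds 0) (nhds 0) := by
        have : Continuous (fun t : ℂ => t • z) := continuous_id.smul continuous_const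
        simpa using this.tendsto 0
      have hmem : ∀ᶠ w in nhds (0 : Fin N → ℂ), w ∈ Metric.eball (0 : Fin N → ℂ) rB :=
        Metric.eball_mem_nhds 0 hrB.r_pos
      filter_upwards [htend.eventually hmem] with t ht
      have := hrB.hasSum (y := t • z) (by simpa using ht)
      have heq : ∀ n, P n (fun _ => t • z) = t ^ n • P n (fun _ => z) := by
        intro n
        have := (P n).map_smul_univ (fun _ => t) (fun _ => z)
        simpa using this
      simp only [zero_add, heq] at this
      exact this
  have heqs := h1.eq_formalMultilinearSeries h2
  intro n
  have hfn := congrFun heqs n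
  have happ := congrArg
    (fun (M : ContinuousMultilinearMap ℂ (fun _ : Fin n => ℂ) E) => M (fun _ => (1:ℂ))) hfn
  simpa only [ovs_apply, one_pow, one_smul] using happ




lemma pencil_smul_aux {N : ℕ} {E F : Type*} [NormedAddCommGroup E] [NormedAddCommGroup F]
    [NormedSpace ℂ E] [NormedSpace ℂ F] (T : Fin N → (E →L[ℂ] F)) (t : ℂ) (z : Fin N → ℂ) :
    pencil T (t • z) = t • pencil T z := by
  simp only [pencil, Finset.smul_sum, Pi.smul_apply, smul_eq_mul, mul_smul]

lemma pencil_zero_aux {N : ℕ} {E F : Type*} [NormedAddCommGroup E] [NormedAddCommGroup F]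
    [NormedSpace ℂ E] [NormedSpace ℂ F] (T : Fin N → (E →L[ℂ] F)) :
    pencil T (0 : Fin N → ℂ) = 0 := by
  simp [pencil]

lemma pencil_analyticAt_aux {N : ℕ} {E F : Type*} [NormedAddCommGroup E] [NormedAddCommGroup F]
    [NormedSpace ℂ E] [NormedSpace ℂ F] (T : Fin N → (E →L[ℂ] F)) (z₀ : Fin N → ℂ) :
    AnalyticAt ℂ (fun z => pencil T z) z₀ := by
  unfold pencil
  exact Finset.analyticAt_fun_sum _ (fun k _ =>
    ((ContinuousLinearMap.proj k : (Fin N → ℂ) →L[ℂ] ℂ).analyticAt z₀).smul analyticAt_const)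

lemma pow_comp_norm {X U : Type*} [NormedAddCommGroup X] [NormedAddCommGroup U]
    [NormedSpace ℂ X] [NormedSpace ℂ U] (a : X →L[ℂ] X) (b : U →L[ℂ] X) :
    ∀ k, ‖(a ^ k).comp b‖ ≤ ‖a‖ ^ k * ‖b‖
  | 0 => by
    rw [pow_zero, ContinuousLinearMap.one_def, ContinuousLinearMap.id_comp]
    simp
  | (k+1) => by
    have h : (a ^ (k+1)).comp b = a.comp ((a ^ k).comp b) := by
      rw [pow_succ', ContinuousLinearMap.mul_def, ContinuousLinearMap.comp_assoc]
    rw [h]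
    calc ‖a.comp ((a ^ k).comp b)‖ ≤ ‖a‖ * ‖(a ^ k).comp b‖ := ContinuousLinearMap.opNorm_comp_le _ _
      _ ≤ ‖a‖ * (‖a‖ ^ k * ‖b‖) := by
          exact mul_le_mul_of_nonneg_left (pow_comp_norm a b k) (norm_nonneg a)
      _ = ‖a‖ ^ (k+1) * ‖b‖ := by ring

lemma inverse_split {R : Type*} [Ring R] (a : R) (k : ℕ) (hu : IsUnit (1 - a)) :
    Ring.inverse (1 - a) = a ^ k * Ring.inverse (1 - a) + ∑ j ∈ Finset.range k, a ^ j := by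
  set iv := Ring.inverse (1 - a)
  have h1 : (∑ j ∈ Finset.range k, a ^ j) * (1 - a) = 1 - a ^ k := by
    have h := geom_sum_mul a k
    have h2 : (∑ j ∈ Finset.range k, a ^ j) * (1 - a) = -((∑ j ∈ Finset.range k, a ^ j) * (a - 1)) := by
      noncomm_ring
    rw [h2, h]; noncomm_ring
  have h2 : iv - a ^ k * iv = ∑ j ∈ Finset.range k, a ^ j := by
    have h3 : iv - a ^ k * iv = (1 - a ^ k) * iv := by noncomm_ring
    rw [h3, ← h1, mul_assoc, Ring.mul_inverse_cancel _ hu, mul_one]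
  rw [← h2]; noncomm_ring

lemma bound_pow_aux (x : ℝ) (hx : 0 ≤ x) {k n : ℕ} (hk : k ≤ n) : x ^ k ≤ (x + 1) ^ n :=
  le_trans (pow_le_pow_left₀ hx (by linarith) k)
    (pow_le_pow_right₀ (by linarith) hk)

lemma hasSum_geom_comp {X U V : Type*} [NormedAddCommGroup X] [NormedAddCommGroup U]
    [NormedAddCommGroup V] [NormedSpace ℂ X] [NormedSpace ℂ U] [NormedSpace ℂ V]
    [CompleteSpace X]
    (L : (X →L[ℂ] X) →L[ℂ] (U →L[ℂ] V)) (a : X →L[ℂ] X) (t : ℂ) (h : ‖t • a‖ < 1)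
    (k : ℕ) (c : ℕ → (U →L[ℂ] V)) (hc0 : ∀ n, n < k → c n = 0)
    (hck : ∀ i, c (i + k) = L (a ^ i)) :
    HasSum (fun n => t ^ n • c n) (t ^ k • L (Ring.inverse (1 - t • a))) := by
  have H : HasSum (fun i => (t • a) ^ i) (Ring.inverse (1 - t • a)) :=
    hasSum_geom_series_inverse (t • a) h
  have H2 := L.hasSum H
  have H3 := H2.const_smul (t ^ k)
  have heq : (fun i => t ^ k • L ((t • a) ^ i)) = fun i => t ^ (i + k) • c (i + k) := by
    funext i
    rw [hck i, smul_pow, map_smul, smul_smul, ← pow_add, add_comm k i]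
  rw [heq] at H3
  have H4 := (hasSum_nat_add_iff (f := fun n => t ^ n • c n) k).mp H3
  have hz : ∑ i ∈ Finset.range k, t ^ i • c i = 0 := by
    apply Finset.sum_eq_zero
    intro i hi
    rw [hc0 i (Finset.mem_range.mp hi), smul_zero]
  rwa [hz, add_zero] at H4

end ZCAux

/-- the inductive step of the linear-factor extraction theorem: if
`θ(z) = zC(I − zA)⁻¹zB` has a zero of multiplicity `m ≥ 2` at `0`, then `θ(z) = (zC)·θ̃(z)`
near `0`, where `θ̃(z) = (zA)^{m−2}(I − zA)⁻¹zB` has a zero of multiplicity exactly `m − 1`. -/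
theorem inductive_step_factor_off_zC {N m : ℕ} {X U Y : Type}
    [NormedAddCommGroup X] [InnerProductSpace ℂ X] [CompleteSpace X]
    [TopologicalSpace.SeparableSpace X]
    [NormedAddCommGroup U] [InnerProductSpace ℂ U] [CompleteSpace U]
    [TopologicalSpace.SeparableSpace U]
    [NormedAddCommGroup Y] [InnerProductSpace ℂ Y] [CompleteSpace Y]
    [TopologicalSpace.SeparableSpace Y]
    (A : Fin N → (X →L[ℂ] X)) (B : Fin N → (U →L[ℂ] X)) (C : Fin N → (X →L[ℂ] Y))
    (θ : (Fin N → ℂ) → (U →L[ℂ] Y)) (θt : (Fin N → ℂ) → (U →L[ℂ] X))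
    (hθ : ∀ᶠ z in nhds 0, IsUnit (1 - pencil A z) ∧
      θ z = (pencil C z).comp ((Ring.inverse (1 - pencil A z)).comp (pencil B z)))
    (hθt : ∀ᶠ z in nhds 0, θt z =
      ((pencil A z) ^ (m - 2)).comp ((Ring.inverse (1 - pencil A z)).comp (pencil B z)))
    (hm : 2 ≤ m) (hzero : HasZeroOfOrder θ m) :
    (∀ᶠ z in nhds 0, θ z = (pencil C z).comp (θt z)) ∧ HasZeroOfOrder θt (m - 1) := by
  classical
  obtain ⟨p, hp, hpvan, z₀, hz₀⟩ := hzero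
  open ZCAux in
  -- the continuous linear maps D ↦ zC ∘ D ∘ zB and D ↦ (zA)^(m-2) ∘ D ∘ zB
  let L1 : (Fin N → ℂ) → ((X →L[ℂ] X) →L[ℂ] (U →L[ℂ] Y)) := fun z =>
    (ContinuousLinearMap.compL ℂ U X Y (pencil C z)).comp
      ((ContinuousLinearMap.compL ℂ U X X).flip (pencil B z))
  have hL1 : ∀ z D, L1 z D = (pencil C z).comp (D.comp (pencil B z)) := by
    intro z D
    simp [L1, ContinuousLinearMap.comp_apply, ContinuousLinearMap.flip_apply,
      ContinuousLinearMap.compL_apply]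
  let L2 : (Fin N → ℂ) → ((X →L[ℂ] X) →L[ℂ] (U →L[ℂ] X)) := fun z =>
    (ContinuousLinearMap.compL ℂ U X X ((pencil A z) ^ (m - 2))).comp
      ((ContinuousLinearMap.compL ℂ U X X).flip (pencil B z))
  have hL2 : ∀ z D, L2 z D = ((pencil A z) ^ (m - 2)).comp (D.comp (pencil B z)) := by
    intro z D
    simp [L2, ContinuousLinearMap.comp_apply, ContinuousLinearMap.flip_apply,
      ContinuousLinearMap.compL_apply]
  -- coefficient sequences along a direction z
  let c1 : (Fin N → ℂ) → ℕ → (U →L[ℂ] Y) := fun z n =>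
    if 2 ≤ n then (pencil C z).comp (((pencil A z) ^ (n - 2)).comp (pencil B z)) else 0
  let c2 : (Fin N → ℂ) → ℕ → (U →L[ℂ] X) := fun z n =>
    if m - 1 ≤ n then ((pencil A z) ^ (n - 1)).comp (pencil B z) else 0
  -- eventual facts along a line
  have hev : ∀ z : Fin N → ℂ, ∀ᶠ t in nhds (0 : ℂ), ‖t • pencil A z‖ < 1 ∧
      (IsUnit (1 - pencil A (t • z)) ∧ θ (t • z) = (pencil C (t • z)).comp
        ((Ring.inverse (1 - pencil A (t • z))).comp (pencil B (t • z)))) ∧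
      θt (t • z) = ((pencil A (t • z)) ^ (m - 2)).comp
        ((Ring.inverse (1 - pencil A (t • z))).comp (pencil B (t • z))) := by
    intro z
    have htend : Filter.Tendsto (fun t : ℂ => t • z) (nhds 0) (nhds 0) := by
      have hc : Continuous (fun t : ℂ => t • z) := continuous_id.smul continuous_const
      simpa using hc.tendsto 0
    have h1 : ∀ᶠ t in nhds (0 : ℂ), ‖t • pencil A z‖ < 1 := by
      have hc : Continuous (fun t : ℂ => t • pencil A z) := continuous_id.smul continuous_const
      have ht : Filter.Tendsto (fun t : ℂ => ‖t • pencil A z‖) (nhds 0) (nhds 0) := by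
        simpa using hc.norm.tendsto 0
      exact ht.eventually_lt_const one_pos
    filter_upwards [h1, htend.eventually hθ, htend.eventually hθt] with t ht1 ht2 ht3
    exact ⟨ht1, ht2, ht3⟩
  -- power-series coefficients of θ along the line through z
  have hb1 : ∀ z : Fin N → ℂ, ∀ n, ‖c1 z n‖ ≤
      (‖pencil C z‖ * ‖pencil B z‖) * (((‖pencil A z‖₊ : ℝ)) + 1) ^ n := by
    intro z n
    rw [coe_nnnorm]
    by_cases h : 2 ≤ n
    · simp only [c1, if_pos h]
      calc ‖(pencil C z).comp (((pencil A z) ^ (n - 2)).comp (pencil B z))‖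
          ≤ ‖pencil C z‖ * ‖((pencil A z) ^ (n - 2)).comp (pencil B z)‖ :=
            ContinuousLinearMap.opNorm_comp_le _ _
        _ ≤ ‖pencil C z‖ * (‖pencil A z‖ ^ (n - 2) * ‖pencil B z‖) :=
            mul_le_mul_of_nonneg_left (pow_comp_norm _ _ _) (norm_nonneg _)
        _ = (‖pencil C z‖ * ‖pencil B z‖) * ‖pencil A z‖ ^ (n - 2) := by ring
        _ ≤ (‖pencil C z‖ * ‖pencil B z‖) * (‖pencil A z‖ + 1) ^ n :=
            mul_le_mul_of_nonneg_left
              (bound_pow_aux _ (norm_nonneg _) (by omega)) (by positivity)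
    · simp only [c1, if_neg h, norm_zero]
      positivity
  have hsum1 : ∀ z : Fin N → ℂ, ∀ᶠ t in nhds (0 : ℂ),
      HasSum (fun n => t ^ n • c1 z n) (θ (t • z)) := by
    intro z
    filter_upwards [hev z] with t ht
    obtain ⟨ht1, ⟨htu, htθ⟩, -⟩ := ht
    have H := hasSum_geom_comp (L1 z) (pencil A z) t ht1 2 (c1 z)
      (fun n hn => by simp only [c1, if_neg (by omega : ¬ 2 ≤ n)])
      (fun i => by
        simp only [c1, if_pos (by omega : 2 ≤ i + 2), Nat.add_sub_cancel, hL1])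
    have hval : θ (t • z) = t ^ 2 • (L1 z) (Ring.inverse (1 - t • pencil A z)) := by
      rw [htθ, pencil_smul_aux A, pencil_smul_aux B, pencil_smul_aux C, hL1]
      rw [ContinuousLinearMap.comp_smul, ContinuousLinearMap.comp_smul,
        ContinuousLinearMap.smul_comp, smul_smul, pow_two]
    rw [hval]
    exact H
  have key1 : ∀ z : Fin N → ℂ, ∀ n, (p n) (fun _ => z) = c1 z n := fun z =>
    diag_coeff hp z (c1 z) (‖pencil A z‖₊) (‖pencil C z‖ * ‖pencil B z‖) (hb1 z) (hsum1 z)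
  -- vanishing of the low-order explicit coefficients
  have vanish : ∀ z : Fin N → ℂ, ∀ j, j < m - 2 →
      (pencil C z).comp (((pencil A z) ^ j).comp (pencil B z)) = 0 := by
    intro z j hj
    have h := (key1 z (j + 2)).symm
    rw [hpvan (j + 2) (by omega) z] at h
    simpa only [c1, if_pos (by omega : 2 ≤ j + 2), Nat.add_sub_cancel] using h
  have hz₀' : (pencil C z₀).comp (((pencil A z₀) ^ (m - 2)).comp (pencil B z₀)) ≠ 0 := by
    intro hcon
    apply hz₀
    rw [key1 z₀ m]
    simpa only [c1, if_pos hm] using hcon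
  constructor
  · -- θ = zC ∘ θt near 0
    filter_upwards [hθ, hθt] with z hz1 hz2
    obtain ⟨hu, hθz⟩ := hz1
    rw [hθz, hz2]
    have hlhs : (pencil C z).comp ((Ring.inverse (1 - pencil A z)).comp (pencil B z)) =
        L1 z (Ring.inverse (1 - pencil A z)) := (hL1 z _).symm
    have hrhs : (pencil C z).comp ((((pencil A z) ^ (m - 2)).comp
        ((Ring.inverse (1 - pencil A z)).comp (pencil B z)))) =
        L1 z ((pencil A z) ^ (m - 2) * Ring.inverse (1 - pencil A z)) := by
      rw [hL1, ContinuousLinearMap.mul_def, ContinuousLinearMap.comp_assoc]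
    rw [hlhs, hrhs]
    conv_lhs => rw [inverse_split (pencil A z) (m - 2) hu]
    rw [map_add]
    have hS : (L1 z) (∑ j ∈ Finset.range (m - 2), (pencil A z) ^ j) = 0 := by
      rw [map_sum]
      apply Finset.sum_eq_zero
      intro j hj
      rw [hL1]
      exact vanish z j (Finset.mem_range.mp hj)
    rw [hS, add_zero]
  · -- θt has a zero of order exactly m - 1
    have hA0 : pencil A (0 : Fin N → ℂ) = 0 := pencil_zero_aux A
    have ha := pencil_analyticAt_aux A (0 : Fin N → ℂ)
    have hbB := pencil_analyticAt_aux B (0 : Fin N → ℂ)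
    have hinv : AnalyticAt ℂ (fun z => Ring.inverse (1 - pencil A z)) 0 := by
      have h1 := analyticAt_inverse_one_sub ℂ (X →L[ℂ] X)
      have h2 : AnalyticAt ℂ (fun x : X →L[ℂ] X => Ring.inverse (1 - x))
          (pencil A (0 : Fin N → ℂ)) := by rw [hA0]; exact h1
      exact h2.comp ha
    have hM : AnalyticAt ℂ
        (fun z => (pencil A z) ^ (m - 2) * Ring.inverse (1 - pencil A z)) 0 :=
      (ha.pow _).mul hinv
    have hθtA : AnalyticAt ℂ θt 0 := by
      have hbil := (ContinuousLinearMap.compL ℂ U X X).analyticAt_bilinear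
        ((pencil A (0 : Fin N → ℂ)) ^ (m - 2) *
          Ring.inverse (1 - pencil A (0 : Fin N → ℂ)), pencil B (0 : Fin N → ℂ))
      have h2 : AnalyticAt ℂ (fun z => (ContinuousLinearMap.compL ℂ U X X)
          ((pencil A z) ^ (m - 2) * Ring.inverse (1 - pencil A z)) (pencil B z)) 0 :=
        AnalyticAt.comp₂ hbil hM hbB
      apply h2.congr
      filter_upwards [hθt] with z hz
      rw [ContinuousLinearMap.compL_apply, hz, ContinuousLinearMap.mul_def,
        ContinuousLinearMap.comp_assoc]
    obtain ⟨q, hq⟩ := hθtA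
    have hb2 : ∀ z : Fin N → ℂ, ∀ n, ‖c2 z n‖ ≤
        ‖pencil B z‖ * (((‖pencil A z‖₊ : ℝ)) + 1) ^ n := by
      intro z n
      rw [coe_nnnorm]
      by_cases h : m - 1 ≤ n
      · simp only [c2, if_pos h]
        calc ‖((pencil A z) ^ (n - 1)).comp (pencil B z)‖
            ≤ ‖pencil A z‖ ^ (n - 1) * ‖pencil B z‖ := pow_comp_norm _ _ _
          _ = ‖pencil B z‖ * ‖pencil A z‖ ^ (n - 1) := by ring
          _ ≤ ‖pencil B z‖ * (‖pencil A z‖ + 1) ^ n :=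
              mul_le_mul_of_nonneg_left
                (bound_pow_aux _ (norm_nonneg _) (by omega)) (norm_nonneg _)
      · simp only [c2, if_neg h, norm_zero]
        positivity
    have hsum2 : ∀ z : Fin N → ℂ, ∀ᶠ t in nhds (0 : ℂ),
        HasSum (fun n => t ^ n • c2 z n) (θt (t • z)) := by
      intro z
      filter_upwards [hev z] with t ht
      obtain ⟨ht1, -, htθt⟩ := ht
      have H := hasSum_geom_comp (L2 z) (pencil A z) t ht1 (m - 1) (c2 z)
        (fun n hn => by simp only [c2, if_neg (by omega : ¬ m - 1 ≤ n)])
        (fun i => by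
          simp only [c2, if_pos (by omega : m - 1 ≤ i + (m - 1)), hL2]
          rw [show i + (m - 1) - 1 = (m - 2) + i by omega, pow_add,
            ContinuousLinearMap.mul_def, ContinuousLinearMap.comp_assoc])
      have hval : θt (t • z) = t ^ (m - 1) • (L2 z) (Ring.inverse (1 - t • pencil A z)) := by
        rw [htθt, pencil_smul_aux A, pencil_smul_aux B, hL2]
        simp only [smul_pow, ContinuousLinearMap.comp_smul, ContinuousLinearMap.smul_comp,
          smul_smul]
        rw [← pow_succ', show m - 2 + 1 = m - 1 by omega]
      rw [hval]
      exact H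
    have key2 : ∀ z : Fin N → ℂ, ∀ n, (q n) (fun _ => z) = c2 z n := fun z =>
      diag_coeff hq z (c2 z) (‖pencil A z‖₊) (‖pencil B z‖) (hb2 z) (hsum2 z)
    refine ⟨q, hq, ?_, ⟨z₀, ?_⟩⟩
    · intro j hj z
      rw [key2 z j]
      simp only [c2, if_neg (by omega : ¬ m - 1 ≤ j)]
    · rw [key2 z₀ (m - 1)]
      have hc : c2 z₀ (m - 1) = ((pencil A z₀) ^ (m - 2)).comp (pencil B z₀) := by
        simp only [c2, if_pos (le_refl (m - 1)), show m - 1 - 1 = m - 2 from by omega]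
      rw [hc]
      intro hcon
      exact hz₀' (by rw [hcon, ContinuousLinearMap.comp_zero])
end
end
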